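/- arXiv:1507.08792 — 12 statements merged into one kernel-verified Lean document; each statement's English description precedes it below -/
import Mathlib

section
/- Let G be a graph and e = {x,y} an edge such that the induced subgraph G[N(x) ∩ N(y)] contains k+1 non-edges forming a non-matching (pairwise disjoint non-adjacent pairs). Then every set S of at most k edges such that G − S is diamond-free must contain e. -/
/-- The diamond graph: `K₄` minus one edge. -/
def diamondGraph : SimpleGraph (Fin 4) :=
  (SimpleGraph.completeGraph (Fin 4)).deleteEdges {s(0, 1)}

/-- A graph is diamond-free if it has no induced subgraph isomorphic to a diamond. -/
def DiamondFree {V : Type*} (G : SimpleGraph V) : Prop :=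
  IsEmpty (diamondGraph ↪g G)

def diamond_emb {V : Type*} (H : SimpleGraph V) {x y a b : V}
    (hxy : H.Adj x y) (hxa : H.Adj x a) (hya : H.Adj y a)
    (hxb : H.Adj x b) (hyb : H.Adj y b) (hab : ¬ H.Adj a b) (hne : a ≠ b) :
    diamondGraph ↪g H := by
  have h1 : a ≠ x := hxa.ne'
  have h2 : a ≠ y := hya.ne'
  have h3 : b ≠ x := hxb.ne'
  have h4 : b ≠ y := hyb.ne'
  have h5 : x ≠ y := hxy.ne
  refine ⟨⟨![a, b, x, y], ?_⟩, ?_⟩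
  · intro u v huv
    fin_cases u <;> fin_cases v <;> simp_all
  · intro u v
    fin_cases u <;> fin_cases v <;>
      simp_all [diamondGraph, SimpleGraph.deleteEdges, SimpleGraph.completeGraph,
        Sym2.eq, Sym2.rel_iff', H.adj_comm x y, H.adj_comm x a, H.adj_comm y a,
        H.adj_comm x b, H.adj_comm y b, H.adj_comm a b] <;> tauto

/-- Sunflower rule: if the common neighborhood of the edge {x,y} contains k+1 pairwise
vertex-disjoint non-adjacent pairs, then every set of at most k edges whose deletion makes
the graph diamond-free contains the edge {x,y}. -/
theorem stmt_3 {V : Type*} (G : SimpleGraph V) (x y : V) (k : ℕ)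
    (hxy : G.Adj x y)
    (a b : Fin (k + 1) → V)
    (hax : ∀ i, G.Adj x (a i)) (hay : ∀ i, G.Adj y (a i))
    (hbx : ∀ i, G.Adj x (b i)) (hby : ∀ i, G.Adj y (b i))
    (hnadj : ∀ i, ¬ G.Adj (a i) (b i)) (hne : ∀ i, a i ≠ b i)
    (hdisj : ∀ i j, i ≠ j → ({a i, b i} : Set V) ∩ {a j, b j} = ∅) :
    ∀ S : Set (Sym2 V), S.encard ≤ (k : ℕ∞) →
      DiamondFree (G.deleteEdges S) → s(x, y) ∈ S := by
  intro S hS hdf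
  by_contra hxyS
  have key : ∀ i : Fin (k+1), ∃ p : V × V, (p.1 = x ∨ p.1 = y) ∧
      (p.2 = a i ∨ p.2 = b i) ∧ s(p.1, p.2) ∈ S := by
    intro i
    by_contra h
    push_neg at h
    have h1 : s(x, a i) ∉ S := fun hs => h (x, a i) (Or.inl rfl) (Or.inl rfl) hs
    have h2 : s(y, a i) ∉ S := fun hs => h (y, a i) (Or.inr rfl) (Or.inl rfl) hs
    have h3 : s(x, b i) ∉ S := fun hs => h (x, b i) (Or.inl rfl) (Or.inr rfl) hs
    have h4 : s(y, b i) ∉ S := fun hs => h (y, b i) (Or.inr rfl) (Or.inr rfl) hs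
    exact hdf.elim (diamond_emb _
      (SimpleGraph.deleteEdges_adj.2 ⟨hxy, hxyS⟩)
      (SimpleGraph.deleteEdges_adj.2 ⟨hax i, h1⟩)
      (SimpleGraph.deleteEdges_adj.2 ⟨hay i, h2⟩)
      (SimpleGraph.deleteEdges_adj.2 ⟨hbx i, h3⟩)
      (SimpleGraph.deleteEdges_adj.2 ⟨hby i, h4⟩)
      (fun hab => hnadj i hab.1) (hne i))
  choose p hp1 hp2 hp3 using key
  have h2x : ∀ i, (p i).2 ≠ x := fun i => by
    rcases hp2 i with h | h <;> rw [h]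
    exacts [(hax i).ne', (hbx i).ne']
  have h2y : ∀ i, (p i).2 ≠ y := fun i => by
    rcases hp2 i with h | h <;> rw [h]
    exacts [(hay i).ne', (hby i).ne']
  set E : Fin (k+1) → Sym2 V := fun i => s((p i).1, (p i).2) with hE
  have hEinj : Function.Injective E := by
    intro i j hij
    by_contra hij'
    have hdj := hdisj i j hij'
    simp only [hE, Sym2.eq, Sym2.rel_iff', Prod.mk.injEq, Prod.swap_prod_mk] at hij
    rcases hij with ⟨h11, h22⟩ | ⟨h12, h21⟩
    · have mi : (p i).2 ∈ ({a i, b i} : Set V) := by rcases hp2 i with h | h <;> simp [h]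
      have mj : (p i).2 ∈ ({a j, b j} : Set V) := by
        rw [h22]; rcases hp2 j with h | h <;> simp [h]
      have : (p i).2 ∈ ({a i, b i} : Set V) ∩ {a j, b j} := ⟨mi, mj⟩
      rw [hdj] at this
      exact this
    · rcases hp1 i with h | h
      · exact h2x j (h12 ▸ h)
      · exact h2y j (h12 ▸ h)
  have hsub : Set.range E ⊆ S := by
    rintro _ ⟨i, rfl⟩; exact hp3 i
  have hcard : (k + 1 : ℕ∞) ≤ S.encard := by
    calc (k + 1 : ℕ∞) = (Set.range E).encard := by
          rw [← Set.image_univ, Set.InjOn.encard_image (hEinj.injOn),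
            Set.encard_univ]
          simp [ENat.card_eq_coe_natCard]
      _ ≤ S.encard := Set.encard_mono hsub
  have hc : (k + 1 : ℕ∞) ≤ (k : ℕ∞) := hcard.trans hS
  exact absurd hc (by exact_mod_cast Nat.not_succ_le_self k)
end

section
/- Let G' be obtained from G by splitting a vertex v whose neighborhood induces t > 1 components with vertex sets V_1, ..., V_t: delete v and add t new pairwise non-adjacent vertices v_1, ..., v_t, where v_i is adjacent exactly to the vertices of V_i. Then for every pair of new vertices v_i and v_j (i ≠ j), the distance between v_i and v_j in G' is at least four. -/
/-- The graph obtained from `G` by splitting the vertex `v`: `v` is deleted and replaced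
by one new vertex per connected component of `G[N(v)]`, each new vertex being adjacent
exactly to the vertices of its component; new vertices are pairwise non-adjacent. -/
def splitGraph {V : Type*} (G : SimpleGraph V) (v : V) :
    SimpleGraph ({u : V // u ≠ v} ⊕ (G.induce (G.neighborSet v)).ConnectedComponent) where
  Adj a b :=
    match a, b with
    | Sum.inl u, Sum.inl w => G.Adj u.1 w.1
    | Sum.inl u, Sum.inr c => ∃ h : u.1 ∈ G.neighborSet v,
        (G.induce (G.neighborSet v)).connectedComponentMk ⟨u.1, h⟩ = c
    | Sum.inr c, Sum.inl u => ∃ h : u.1 ∈ G.neighborSet v,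
        (G.induce (G.neighborSet v)).connectedComponentMk ⟨u.1, h⟩ = c
    | Sum.inr _, Sum.inr _ => False
  symm := by
    constructor
    rintro (u | c) (w | d) h
    · exact h.symm
    · exact h
    · exact h
    · exact h
  loopless := by
    constructor
    rintro (u | c) h
    · exact G.irrefl h
    · exact h

/-- After splitting a vertex `v`, any two distinct new vertices are at distance at least
four: every walk between them has length at least 4. -/
theorem stmt_4 {V : Type*} (G : SimpleGraph V) (v : V)
    (c d : (G.induce (G.neighborSet v)).ConnectedComponent) (hcd : c ≠ d) :
    ∀ p : (splitGraph G v).Walk (Sum.inr c) (Sum.inr d), 4 ≤ p.length := by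
  intro p
  cases p with
  | nil => exact absurd rfl hcd
  | cons h q =>
    rename_i b
    cases b with
    | inr e => exact h.elim
    | inl u =>
      obtain ⟨hu, hcu⟩ := h
      cases q with
      | cons h2 r =>
        rename_i b2
        cases b2 with
        | inr e =>
          obtain ⟨hu2, hue⟩ := h2
          have he : e = c := hue.symm.trans hcu
          subst he
          cases r with
          | nil => exact absurd rfl hcd
          | cons h3 s =>
            rename_i b3
            cases b3 with
            | inr f => exact h3.elim
            | inl u' =>
              cases s with
              | cons h4 s2 =>
                show 4 ≤ s2.length + 1 + 1 + 1 + 1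
                omega
        | inl w =>
          have hadj : G.Adj u.1 w.1 := h2
          cases r with
          | cons h3 s =>
            rename_i b3
            cases b3 with
            | inl x =>
              cases s with
              | cons h4 s2 =>
                show 4 ≤ s2.length + 1 + 1 + 1 + 1
                omega
            | inr f =>
              obtain ⟨hw, hwf⟩ := h3
              cases s with
              | nil =>
                have hind : (G.induce (G.neighborSet v)).Adj ⟨u.1, hu⟩ ⟨w.1, hw⟩ := hadj
                have : c = d := by
                  rw [← hcu, ← hwf]
                  exact SimpleGraph.ConnectedComponent.sound hind.reachable
                exact absurd this hcd
              | cons h4 s2 =>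
                show 4 ≤ s2.length + 1 + 1 + 1 + 1
                omega
end

section
/- Let G' be obtained from G by splitting a vertex v (replacing v by one new vertex per connected component of G[N(v)], each adjacent exactly to its component). If a vertex u ≠ v has connected neighborhood in G, then u has connected neighborhood in G'. Moreover, every new vertex v_i has connected neighborhood in G'. -/
private lemma splitAux {V : Type*} (G : SimpleGraph V) (v : V)
    (c : (G.induce (G.neighborSet v)).ConnectedComponent) :
    ∀ {a b : G.neighborSet v} (_ : (G.induce (G.neighborSet v)).Walk a b)
      (ha : (G.induce (G.neighborSet v)).connectedComponentMk a = c)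
      (hb : (G.induce (G.neighborSet v)).connectedComponentMk b = c),
      ((splitGraph G v).induce ((splitGraph G v).neighborSet (Sum.inr c))).Reachable
        ⟨Sum.inl ⟨a.1, fun h => G.irrefl (h ▸ a.2)⟩, ⟨a.2, ha⟩⟩
        ⟨Sum.inl ⟨b.1, fun h => G.irrefl (h ▸ b.2)⟩, ⟨b.2, hb⟩⟩ := by
  intro a b p
  induction p with
  | nil => intro ha hb; rfl
  | @cons a a' b h p ih =>
    intro ha hb
    have ha' : (G.induce (G.neighborSet v)).connectedComponentMk a' = c :=
      (SimpleGraph.ConnectedComponent.sound h.reachable.symm).trans ha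
    have hadj : ((splitGraph G v).induce
        ((splitGraph G v).neighborSet (Sum.inr c))).Adj
        ⟨Sum.inl ⟨a.1, fun hh => G.irrefl (hh ▸ a.2)⟩, ⟨a.2, ha⟩⟩
        ⟨Sum.inl ⟨a'.1, fun hh => G.irrefl (hh ▸ a'.2)⟩, ⟨a'.2, ha'⟩⟩ := h
    exact hadj.reachable.trans (ih ha' hb)

/-- Splitting a vertex `v` preserves connected neighborhoods: every vertex `u ≠ v` with
connected neighborhood in `G` has connected neighborhood in the split graph, and every
new vertex has connected neighborhood in the split graph. -/
theorem stmt_5 {V : Type*} (G : SimpleGraph V) (v : V) :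
    (∀ u : {u : V // u ≠ v},
      (G.induce (G.neighborSet u.1)).Connected →
      ((splitGraph G v).induce ((splitGraph G v).neighborSet (Sum.inl u))).Connected) ∧
    (∀ c : (G.induce (G.neighborSet v)).ConnectedComponent,
      ((splitGraph G v).induce ((splitGraph G v).neighborSet (Sum.inr c))).Connected) := by
  classical
  constructor
  · intro u hconn
    set H := splitGraph G v with hH
    let f : (G.neighborSet u.1 : Set V) → (H.neighborSet (Sum.inl u) : Set _) :=
      fun w =>
        if h : w.1 = v then
          ⟨Sum.inr ((G.induce (G.neighborSet v)).connectedComponentMk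
              ⟨u.1, by
                have h2 : G.Adj u.1 w.1 := w.2
                rw [h] at h2
                exact h2.symm⟩),
            ⟨_, rfl⟩⟩
        else ⟨Sum.inl ⟨w.1, h⟩, w.2⟩
    have hf : ∀ a b : (G.neighborSet u.1 : Set V),
        (G.induce (G.neighborSet u.1)).Adj a b →
        (H.induce (H.neighborSet (Sum.inl u))).Adj (f a) (f b) := by
      intro a b hab
      have hab' : G.Adj a.1 b.1 := hab
      dsimp only [f]
      split_ifs with h1 h2 h2
      · exact absurd (h2 ▸ h1 ▸ hab') (G.irrefl)
      · refine ⟨(by rw [h1] at hab'; exact hab' : G.Adj v b.1), ?_⟩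
        exact SimpleGraph.ConnectedComponent.sound
          (SimpleGraph.Adj.reachable (show G.Adj b.1 u.1 from (b.2 : G.Adj u.1 b.1).symm))
      · refine ⟨(by rw [h2] at hab'; exact hab'.symm : G.Adj v a.1), ?_⟩
        exact SimpleGraph.ConnectedComponent.sound
          (SimpleGraph.Adj.reachable (show G.Adj a.1 u.1 from (a.2 : G.Adj u.1 a.1).symm))
      · exact hab'
    have hsurj : Function.Surjective f := by
      rintro ⟨(w | d), hx⟩
      · refine ⟨⟨w.1, hx⟩, ?_⟩
        simp only [f, dif_neg w.2]
      · obtain ⟨h, hc⟩ := (hx : H.Adj (Sum.inl u) (Sum.inr d))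
        refine ⟨⟨v, (h : G.Adj v u.1).symm⟩, ?_⟩
        simp only [f, dif_pos]
        exact Subtype.ext (congrArg Sum.inr hc)
    exact hconn.map ⟨f, fun {a b} hab => hf a b hab⟩ hsurj
  · intro c
    obtain ⟨a, ha⟩ := c.exists_rep
    haveI : Nonempty ((splitGraph G v).neighborSet (Sum.inr c)) :=
      ⟨⟨Sum.inl ⟨a.1, fun h => G.irrefl (h ▸ a.2)⟩, ⟨a.2, ha⟩⟩⟩
    refine SimpleGraph.Connected.mk ?_
    rintro ⟨(w | d), hx⟩ ⟨(w' | d'), hy⟩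
    · obtain ⟨h1, hc1⟩ := (show (splitGraph G v).Adj (Sum.inr c) (Sum.inl w) from hx)
      obtain ⟨h2, hc2⟩ := (show (splitGraph G v).Adj (Sum.inr c) (Sum.inl w') from hy)
      obtain ⟨p⟩ := SimpleGraph.ConnectedComponent.exact (hc1.trans hc2.symm)
      exact splitAux G v _ p hc1 hc2
    · exact absurd hy (by exact fun h => h)
    · exact absurd hx (by exact fun h => h)
    · exact absurd hx (by exact fun h => h)
end

section
/- Let H be a finite family of graphs, each of which is connected, has diameter at most two, and has the property that the neighborhood of every vertex induces a connected subgraph. Let G' be obtained from G by splitting a vertex v into one vertex per component of G[N(v)]. Then there exists a set of at most k edges of G whose deletion makes G H-free if and only if there exists a set of at most k edges of G' whose deletion makes G' H-free. -/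
open SimpleGraph

section SplitAux

variable {V : Type*} (G : SimpleGraph V) (v : V)

/-- Map the split vertices back to the original graph. -/
def psi : ({u : V // u ≠ v} ⊕ (G.induce (G.neighborSet v)).ConnectedComponent) → V
  | Sum.inl u => u.1
  | Sum.inr _ => v

variable {G v}

@[simp] lemma psi_inl (u : {u : V // u ≠ v}) : psi G v (Sum.inl u) = u.1 := rfl
@[simp] lemma psi_inr (c : (G.induce (G.neighborSet v)).ConnectedComponent) :
    psi G v (Sum.inr c) = v := rfl

lemma split_adj_inl_inl {u w : {u : V // u ≠ v}} :
    (splitGraph G v).Adj (Sum.inl u) (Sum.inl w) ↔ G.Adj u.1 w.1 := Iff.rfl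

lemma split_adj_inl_inr {u : {u : V // u ≠ v}}
    {c : (G.induce (G.neighborSet v)).ConnectedComponent} :
    (splitGraph G v).Adj (Sum.inl u) (Sum.inr c) ↔ ∃ h : u.1 ∈ G.neighborSet v,
      (G.induce (G.neighborSet v)).connectedComponentMk ⟨u.1, h⟩ = c := Iff.rfl

lemma split_adj_inr_inl {u : {u : V // u ≠ v}}
    {c : (G.induce (G.neighborSet v)).ConnectedComponent} :
    (splitGraph G v).Adj (Sum.inr c) (Sum.inl u) ↔ ∃ h : u.1 ∈ G.neighborSet v,
      (G.induce (G.neighborSet v)).connectedComponentMk ⟨u.1, h⟩ = c := Iff.rfl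

lemma split_adj_inr_inr {c d : (G.induce (G.neighborSet v)).ConnectedComponent} :
    ¬ (splitGraph G v).Adj (Sum.inr c) (Sum.inr d) := fun h => h

lemma sameComp {u w : V} (hu : u ∈ G.neighborSet v) (hw : w ∈ G.neighborSet v)
    (h : G.Adj u w) :
    (G.induce (G.neighborSet v)).connectedComponentMk ⟨u, hu⟩ =
      (G.induce (G.neighborSet v)).connectedComponentMk ⟨w, hw⟩ :=
  ConnectedComponent.sound ((show (G.induce (G.neighborSet v)).Adj ⟨u, hu⟩ ⟨w, hw⟩ from h).reachable)

lemma psi_adj {a b} (h : (splitGraph G v).Adj a b) : G.Adj (psi G v a) (psi G v b) := by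
  cases a with
  | inl u => cases b with
    | inl w => exact h
    | inr c => obtain ⟨hu, -⟩ := h; exact hu.symm
  | inr c => cases b with
    | inl w => obtain ⟨hu, -⟩ := h; exact hu
    | inr d => exact h.elim

lemma mapInj : Set.InjOn (Sym2.map (psi G v)) (splitGraph G v).edgeSet := by
  rintro e₁ he₁ e₂ he₂ h
  induction e₁ using Sym2.ind with | _ a b => ?_
  induction e₂ using Sym2.ind with | _ c d => ?_
  rw [SimpleGraph.mem_edgeSet] at he₁ he₂
  rcases a with ua | ca <;> rcases b with ub | cb <;>
    rcases c with uc | cc <;> rcases d with ud | dc <;>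
    simp only [Sym2.map_pair_eq, psi_inl, psi_inr, Sym2.eq_iff] at h <;>
    first
      | exact he₁.elim
      | exact he₂.elim
      | skip
  · -- inl inl / inl inl
    rcases h with ⟨h1, h2⟩ | ⟨h1, h2⟩
    · rw [Sym2.eq_iff]; exact Or.inl ⟨congrArg Sum.inl (Subtype.ext h1),
        congrArg Sum.inl (Subtype.ext h2)⟩
    · rw [Sym2.eq_iff]; exact Or.inr ⟨congrArg Sum.inl (Subtype.ext h1),
        congrArg Sum.inl (Subtype.ext h2)⟩
  · -- inl inl / inl inr
    exfalso; rcases h with ⟨h1, h2⟩ | ⟨h1, h2⟩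
    · exact ub.2 h2
    · exact ua.2 h1
  · -- inl inl / inr inl
    exfalso; rcases h with ⟨h1, h2⟩ | ⟨h1, h2⟩
    · exact ua.2 h1
    · exact ub.2 h2
  · -- inl inr / inl inl
    exfalso; rcases h with ⟨h1, h2⟩ | ⟨h1, h2⟩
    · exact ud.2 h2.symm
    · exact uc.2 h2.symm
  · -- inl inr / inl inr
    rcases h with ⟨h1, h2⟩ | ⟨h1, h2⟩
    · obtain ⟨ha, hca⟩ := he₁
      obtain ⟨hc, hcc⟩ := he₂
      have hu : ua = uc := Subtype.ext h1
      subst hu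
      rw [Sym2.eq_iff]
      exact Or.inl ⟨rfl, congrArg Sum.inr (by rw [← hca, ← hcc])⟩
    · exact absurd h1 ua.2
  · -- inl inr / inr inl
    rcases h with ⟨h1, h2⟩ | ⟨h1, h2⟩
    · exact absurd h1 ua.2
    · obtain ⟨ha, hca⟩ := he₁
      obtain ⟨hc, hcc⟩ := he₂
      have hu : ua = ud := Subtype.ext h1
      subst hu
      rw [Sym2.eq_iff]
      exact Or.inr ⟨rfl, congrArg Sum.inr (by rw [← hca, ← hcc])⟩
  · -- inr inl / inl inl
    exfalso; rcases h with ⟨h1, h2⟩ | ⟨h1, h2⟩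
    · exact uc.2 h1.symm
    · exact ud.2 h1.symm
  · -- inr inl / inl inr
    rcases h with ⟨h1, h2⟩ | ⟨h1, h2⟩
    · exact absurd h2 ub.2
    · obtain ⟨ha, hca⟩ := he₁
      obtain ⟨hc, hcc⟩ := he₂
      have hu : ub = uc := Subtype.ext h2
      subst hu
      rw [Sym2.eq_iff]
      exact Or.inr ⟨congrArg Sum.inr (by rw [← hca, ← hcc]), rfl⟩
  · -- inr inl / inr inl
    rcases h with ⟨h1, h2⟩ | ⟨h1, h2⟩
    · obtain ⟨ha, hca⟩ := he₁
      obtain ⟨hc, hcc⟩ := he₂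
      have hu : ub = ud := Subtype.ext h2
      subst hu
      rw [Sym2.eq_iff]
      exact Or.inl ⟨congrArg Sum.inr (by rw [← hca, ← hcc]), rfl⟩
    · exact absurd h2 ub.2

lemma midAdj {W : Type*} {K : SimpleGraph W} (hc : K.Connected) {x y : W}
    (hd : K.dist x y ≤ 2) (hne : x ≠ y) (hna : ¬ K.Adj x y) :
    ∃ z, K.Adj x z ∧ K.Adj z y := by
  have h0 : K.dist x y ≠ 0 := fun h => hne (hc.dist_eq_zero_iff.mp h)
  have h1 : K.dist x y ≠ 1 := fun h => hna (SimpleGraph.dist_eq_one_iff_adj.mp h)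
  have h2 : K.dist x y = 2 := by omega
  obtain ⟨p, hp⟩ := hc.exists_walk_length_eq_dist x y
  rw [h2] at hp
  cases p with
  | nil => simp at hp
  | cons h q =>
    cases q with
    | nil => simp at hp
    | cons h' r =>
      cases r with
      | nil => exact ⟨_, h, h'⟩
      | cons h'' r' => simp [SimpleGraph.Walk.length_cons] at hp

lemma transfer1 {S : Set (Sym2 V)}
    {S' : Set (Sym2 ({u : V // u ≠ v} ⊕ (G.induce (G.neighborSet v)).ConnectedComponent))}
    (hcompat : ∀ e' ∈ (splitGraph G v).edgeSet, Sym2.map (psi G v) e' ∈ S ↔ e' ∈ S')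
    {W : Type*} {K : SimpleGraph W} (hc : K.Connected) (hd : ∀ a b : W, K.dist a b ≤ 2)
    (f : K ↪g (splitGraph G v).deleteEdges S') :
    Nonempty (K ↪g G.deleteEdges S) := by
  classical
  have fse : ∀ {x y}, K.Adj x y →
      (splitGraph G v).Adj (f x) (f y) ∧ s(f x, f y) ∉ S' :=
    fun h => SimpleGraph.deleteEdges_adj.mp (f.map_adj_iff.mpr h)
  have step1 : ∀ {x y c c'}, f x = Sum.inr c → f y = Sum.inr c' → x = y := by
    intro x y c c' hx hy
    by_contra hne
    have hna : ¬ K.Adj x y := by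
      intro h
      have h2 := (fse h).1
      rw [hx, hy] at h2
      exact split_adj_inr_inr h2
    obtain ⟨z, h1, h2⟩ := midAdj hc (hd x y) hne hna
    have hz1 := (fse h1).1
    have hz2 := (fse h2).1
    rw [hx] at hz1; rw [hy] at hz2
    cases hfz : f z with
    | inr d => rw [hfz] at hz1; exact split_adj_inr_inr hz1
    | inl w =>
      rw [hfz] at hz1 hz2
      obtain ⟨hw1, hc1⟩ := split_adj_inr_inl.mp hz1
      obtain ⟨hw2, hc2⟩ := split_adj_inl_inr.mp hz2
      have hcc : c = c' := by rw [← hc1, ← hc2]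
      exact hne (f.injective (by rw [hx, hy, hcc]))
  have stepc : ∀ {x y c u}, f x = Sum.inr c → f y = Sum.inl u → ¬ K.Adj x y →
      ∀ hu : u.1 ∈ G.neighborSet v,
      (G.induce (G.neighborSet v)).connectedComponentMk ⟨u.1, hu⟩ = c := by
    intro x y c u hx hy hna hu
    have hne : x ≠ y := by
      rintro rfl; rw [hx] at hy; cases hy
    obtain ⟨z, h1, h2⟩ := midAdj hc (hd x y) hne hna
    have hz1 := (fse h1).1
    have hz2 := (fse h2).1
    rw [hx] at hz1; rw [hy] at hz2
    cases hfz : f z with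
    | inr d => rw [hfz] at hz1; exact absurd hz1 split_adj_inr_inr
    | inl w =>
      rw [hfz] at hz1 hz2
      obtain ⟨hw1, hc1⟩ := split_adj_inr_inl.mp hz1
      have hadjwu : G.Adj w.1 u.1 := split_adj_inl_inl.mp hz2
      exact (sameComp hu hw1 hadjwu.symm).trans hc1
  have key : ∀ {x y}, (splitGraph G v).Adj (f x) (f y) →
      s(psi G v (f x), psi G v (f y)) ∉ S → K.Adj x y := by
    intro x y hadj' hns
    apply f.map_adj_iff.mp
    rw [SimpleGraph.deleteEdges_adj]
    refine ⟨hadj', fun hmem => hns ?_⟩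
    have hh := (hcompat _ ((SimpleGraph.mem_edgeSet _).mpr hadj')).mpr hmem
    rwa [Sym2.map_pair_eq] at hh
  refine ⟨⟨⟨fun x => psi G v (f x), ?_⟩, ?_⟩⟩
  · intro x y h
    simp only at h
    cases hfx : f x with
    | inl u => cases hfy : f y with
      | inl w =>
        rw [hfx, hfy] at h
        exact f.injective (by rw [hfx, hfy]; exact congrArg Sum.inl (Subtype.ext h))
      | inr c => rw [hfx, hfy] at h; exact absurd h u.2
    | inr c => cases hfy : f y with
      | inl w => rw [hfx, hfy] at h; exact absurd h.symm w.2
      | inr c' => exact step1 hfx hfy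
  · intro x y
    simp only [RelEmbedding.coe_mk, Function.Embedding.coeFn_mk, SimpleGraph.deleteEdges_adj]
    constructor
    · rintro ⟨hadj, hns⟩
      change G.Adj (psi G v (f x)) (psi G v (f y)) at hadj
      by_contra hna
      have hxy : x ≠ y := by rintro rfl; exact G.irrefl hadj
      cases hfx : f x with
      | inl u =>
        cases hfy : f y with
        | inl w =>
          rw [hfx, hfy] at hadj
          exact hna (key (by rw [hfx, hfy]; exact split_adj_inl_inl.mpr hadj) hns)
        | inr c =>
          rw [hfx, hfy] at hadj
          have hu : u.1 ∈ G.neighborSet v := (G.mem_neighborSet _ _).mpr hadj.symm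
          have hcomp := stepc hfy hfx (fun h => hna h.symm) hu
          exact hna (key (by rw [hfx, hfy]; exact split_adj_inl_inr.mpr ⟨hu, hcomp⟩) hns)
      | inr c =>
        cases hfy : f y with
        | inl u =>
          rw [hfx, hfy] at hadj
          have hu : u.1 ∈ G.neighborSet v := (G.mem_neighborSet _ _).mpr hadj
          have hcomp := stepc hfx hfy hna hu
          exact hna (key (by rw [hfx, hfy]; exact split_adj_inr_inl.mpr ⟨hu, hcomp⟩) hns)
        | inr c' => exact hxy (step1 hfx hfy)
    · intro h
      refine ⟨psi_adj (fse h).1, fun hmem => (fse h).2 ?_⟩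
      apply (hcompat _ ((SimpleGraph.mem_edgeSet _).mpr (fse h).1)).mp
      rwa [Sym2.map_pair_eq]

lemma transfer2 {S : Set (Sym2 V)}
    {S' : Set (Sym2 ({u : V // u ≠ v} ⊕ (G.induce (G.neighborSet v)).ConnectedComponent))}
    (hcompat : ∀ e' ∈ (splitGraph G v).edgeSet, Sym2.map (psi G v) e' ∈ S ↔ e' ∈ S')
    {W : Type*} {K : SimpleGraph W} (hc : K.Connected)
    (hnbrK : ∀ a : W, (K.induce (K.neighborSet a)).Connected)
    (hv : (G.neighborSet v).Nonempty)
    (g : K ↪g G.deleteEdges S) :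
    Nonempty (K ↪g (splitGraph G v).deleteEdges S') := by
  classical
  have gse : ∀ {x y}, K.Adj x y → G.Adj (g x) (g y) ∧ s(g x, g y) ∉ S :=
    fun h => SimpleGraph.deleteEdges_adj.mp (g.map_adj_iff.mpr h)
  have keyll : ∀ {x y} (hx : g x ≠ v) (hy : g y ≠ v),
      ((splitGraph G v).deleteEdges S').Adj (Sum.inl ⟨g x, hx⟩) (Sum.inl ⟨g y, hy⟩) ↔
        K.Adj x y := by
    intro x y hx hy
    rw [SimpleGraph.deleteEdges_adj]
    constructor
    · rintro ⟨hadj, hns⟩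
      have hadj' : G.Adj (g x) (g y) := split_adj_inl_inl.mp hadj
      apply g.map_adj_iff.mp
      rw [SimpleGraph.deleteEdges_adj]
      refine ⟨hadj', fun hmem => hns ?_⟩
      apply (hcompat _ ((SimpleGraph.mem_edgeSet _).mpr hadj)).mp
      rw [Sym2.map_pair_eq]
      simpa only [psi_inl] using hmem
    · intro h
      have hadj : (splitGraph G v).Adj (Sum.inl ⟨g x, hx⟩) (Sum.inl ⟨g y, hy⟩) :=
        split_adj_inl_inl.mpr (gse h).1
      refine ⟨hadj, fun hmem => (gse h).2 ?_⟩
      have hh := (hcompat _ ((SimpleGraph.mem_edgeSet _).mpr hadj)).mpr hmem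
      rw [Sym2.map_pair_eq] at hh
      simpa only [psi_inl] using hh
  by_cases hvr : ∃ x₀, g x₀ = v
  · obtain ⟨x₀, hx₀⟩ := hvr
    have hgne : ∀ {y}, y ≠ x₀ → g y ≠ v :=
      fun hy hgy => hy (g.injective (hgy.trans hx₀.symm))
    have hN : ∀ {y}, K.Adj x₀ y → g y ∈ G.neighborSet v := by
      intro y hy
      have hh := (gse hy).1
      rw [hx₀] at hh
      exact (G.mem_neighborSet _ _).mpr hh
    by_cases hnb : ∃ y, K.Adj x₀ y
    · obtain ⟨y₀, hy₀⟩ := hnb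
      set c := (G.induce (G.neighborSet v)).connectedComponentMk ⟨g y₀, hN hy₀⟩ with hc_def
      let φ : K.induce (K.neighborSet x₀) →g G.induce (G.neighborSet v) :=
        ⟨fun z => ⟨g z.1, hN ((K.mem_neighborSet _ _).mp z.2)⟩, by
          rintro ⟨z₁, hz₁⟩ ⟨z₂, hz₂⟩ hadj
          exact (gse hadj).1⟩
      have compEq : ∀ {y} (hy : K.Adj x₀ y),
          (G.induce (G.neighborSet v)).connectedComponentMk ⟨g y, hN hy⟩ = c := by
        intro y hy
        have hr : (K.induce (K.neighborSet x₀)).Reachable ⟨y, hy⟩ ⟨y₀, hy₀⟩ :=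
          (hnbrK x₀).preconnected _ _
        exact ConnectedComponent.sound (hr.map φ)
      have keyrl : ∀ {b} (hb : b ≠ x₀),
          (((splitGraph G v).deleteEdges S').Adj (Sum.inr c) (Sum.inl ⟨g b, hgne hb⟩) ↔
            K.Adj x₀ b) := by
        intro b hb
        rw [SimpleGraph.deleteEdges_adj]
        constructor
        · rintro ⟨hadj, hns⟩
          obtain ⟨hm, hcm⟩ := split_adj_inr_inl.mp hadj
          apply g.map_adj_iff.mp
          rw [SimpleGraph.deleteEdges_adj, hx₀]
          refine ⟨(G.mem_neighborSet _ _).mp hm, fun hmem => hns ?_⟩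
          apply (hcompat _ ((SimpleGraph.mem_edgeSet _).mpr hadj)).mp
          rw [Sym2.map_pair_eq]
          simpa only [psi_inl, psi_inr] using hmem
        · intro h
          have h1 := gse h
          rw [hx₀] at h1
          have hadj : (splitGraph G v).Adj (Sum.inr c) (Sum.inl ⟨g b, hgne hb⟩) :=
            split_adj_inr_inl.mpr ⟨hN h, compEq h⟩
          refine ⟨hadj, fun hmem => h1.2 ?_⟩
          have hh := (hcompat _ ((SimpleGraph.mem_edgeSet _).mpr hadj)).mpr hmem
          rw [Sym2.map_pair_eq] at hh
          simpa only [psi_inl, psi_inr] using hh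
      refine ⟨⟨⟨fun y => if h : y = x₀ then Sum.inr c else Sum.inl ⟨g y, hgne h⟩, ?_⟩, ?_⟩⟩
      · intro a b hab
        simp only at hab
        by_cases ha : a = x₀ <;> by_cases hb : b = x₀
        · rw [ha, hb]
        · rw [dif_pos ha, dif_neg hb] at hab; exact absurd hab (by simp)
        · rw [dif_neg ha, dif_pos hb] at hab; exact absurd hab (by simp)
        · rw [dif_neg ha, dif_neg hb] at hab
          exact g.injective (congrArg Subtype.val (Sum.inl.inj hab))
      · intro a b
        change ((splitGraph G v).deleteEdges S').Adj
          (if h : a = x₀ then Sum.inr c else Sum.inl ⟨g a, hgne h⟩)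
          (if h : b = x₀ then Sum.inr c else Sum.inl ⟨g b, hgne h⟩) ↔ K.Adj a b
        by_cases ha : a = x₀ <;> by_cases hb : b = x₀
        · subst ha; subst hb
          rw [dif_pos rfl]
          constructor
          · intro h; exact absurd h (((splitGraph G v).deleteEdges S').irrefl)
          · intro h; exact absurd h (K.irrefl)
        · subst ha
          rw [dif_pos rfl, dif_neg hb]
          exact keyrl hb
        · subst hb
          rw [dif_neg ha, dif_pos rfl]
          constructor
          · intro h; exact ((keyrl ha).mp h.symm).symm
          · intro h; exact ((keyrl ha).mpr h.symm).symm
        · rw [dif_neg ha, dif_neg hb]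
          exact keyll (hgne ha) (hgne hb)
    · -- no neighbor of x₀ : K is a single vertex
      have hall : ∀ y, y = x₀ := by
        intro y
        obtain ⟨p⟩ := hc.preconnected x₀ y
        cases p with
        | nil => rfl
        | cons h q => exact absurd ⟨_, h⟩ hnb
      set c₀ := (G.induce (G.neighborSet v)).connectedComponentMk ⟨hv.choose, hv.choose_spec⟩
      refine ⟨⟨⟨fun _ => Sum.inr c₀, fun a b _ => (hall a).trans (hall b).symm⟩, ?_⟩⟩
      intro a b
      change ((splitGraph G v).deleteEdges S').Adj (Sum.inr c₀) (Sum.inr c₀) ↔ K.Adj a b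
      constructor
      · intro h; exact absurd h (((splitGraph G v).deleteEdges S').irrefl)
      · intro h; rw [hall a, hall b] at h; exact absurd h (K.irrefl)
  · -- v not in the range of g
    have hgne : ∀ y, g y ≠ v := fun y h => hvr ⟨y, h⟩
    refine ⟨⟨⟨fun y => Sum.inl ⟨g y, hgne y⟩, ?_⟩, ?_⟩⟩
    · intro a b hab
      exact g.injective (congrArg Subtype.val (Sum.inl.inj hab))
    · intro a b
      change ((splitGraph G v).deleteEdges S').Adj (Sum.inl ⟨g a, hgne a⟩)
        (Sum.inl ⟨g b, hgne b⟩) ↔ K.Adj a b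
      exact keyll (hgne a) (hgne b)

end SplitAux

/-- Safety of the vertex-split rule: if every graph in the finite family `H` is connected,
has diameter at most two and has connected neighborhoods, then `(G,k)` is a yes-instance
of `H`-free edge deletion iff `(G',k)` is, where `G'` is obtained by splitting `v`. -/
theorem stmt_6 {V : Type*} (G : SimpleGraph V) (v : V) (k : ℕ)
    {ι : Type*} [Finite ι] {W : ι → Type*} (H : ∀ i : ι, SimpleGraph (W i))
    (hconn : ∀ i, (H i).Connected)
    (hdiam : ∀ i, ∀ a b : W i, (H i).dist a b ≤ 2)
    (hnbr : ∀ i, ∀ a : W i, ((H i).induce ((H i).neighborSet a)).Connected)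
    (hv : (G.neighborSet v).Nonempty) :
    (∃ S : Set (Sym2 V), S.encard ≤ (k : ℕ∞) ∧
      ∀ i, IsEmpty (H i ↪g G.deleteEdges S)) ↔
    (∃ S : Set (Sym2 ({u : V // u ≠ v} ⊕ (G.induce (G.neighborSet v)).ConnectedComponent)),
      S.encard ≤ (k : ℕ∞) ∧
      ∀ i, IsEmpty (H i ↪g (splitGraph G v).deleteEdges S)) := by
  constructor
  · rintro ⟨S, hSk, hfree⟩
    refine ⟨Sym2.map (psi G v) ⁻¹' S ∩ (splitGraph G v).edgeSet, ?_, ?_⟩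
    · calc (Sym2.map (psi G v) ⁻¹' S ∩ (splitGraph G v).edgeSet).encard
          = (Sym2.map (psi G v) ''
              (Sym2.map (psi G v) ⁻¹' S ∩ (splitGraph G v).edgeSet)).encard :=
            (((mapInj (G := G) (v := v)).mono Set.inter_subset_right).encard_image).symm
        _ ≤ S.encard := Set.encard_mono (by rintro e ⟨e', ⟨heS, _⟩, rfl⟩; exact heS)
        _ ≤ (k : ℕ∞) := hSk
    · intro i
      constructor
      intro f
      have hcompat : ∀ e' ∈ (splitGraph G v).edgeSet,
          Sym2.map (psi G v) e' ∈ S ↔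
            e' ∈ Sym2.map (psi G v) ⁻¹' S ∩ (splitGraph G v).edgeSet :=
        fun e' he' => ⟨fun h => ⟨h, he'⟩, fun h => h.1⟩
      obtain ⟨F⟩ := transfer1 hcompat (hconn i) (hdiam i) f
      exact (hfree i).false F
  · rintro ⟨S', hSk, hfree⟩
    refine ⟨Sym2.map (psi G v) '' (S' ∩ (splitGraph G v).edgeSet), ?_, ?_⟩
    · calc (Sym2.map (psi G v) '' (S' ∩ (splitGraph G v).edgeSet)).encard
          ≤ (S' ∩ (splitGraph G v).edgeSet).encard := Set.encard_image_le _ _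
        _ ≤ S'.encard := Set.encard_mono Set.inter_subset_left
        _ ≤ (k : ℕ∞) := hSk
    · intro i
      constructor
      intro g
      have hcompat : ∀ e' ∈ (splitGraph G v).edgeSet,
          Sym2.map (psi G v) e' ∈ Sym2.map (psi G v) '' (S' ∩ (splitGraph G v).edgeSet) ↔
            e' ∈ S' ∩ (splitGraph G v).edgeSet := by
        intro e' he'
        constructor
        · rintro ⟨e'', he''m, he''eq⟩
          exact (mapInj (G := G) (v := v) he''m.2 he' he''eq) ▸ he''m
        · intro h; exact ⟨e', h, rfl⟩
      obtain ⟨F⟩ := transfer2 hcompat (hconn i) (hnbr i) hv g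
      have hEq : (splitGraph G v).deleteEdges (S' ∩ (splitGraph G v).edgeSet) =
          (splitGraph G v).deleteEdges S' :=
        (SimpleGraph.deleteEdges_eq_inter_edgeSet _).symm
      rw [hEq] at F
      exact (hfree i).false F
end

section
/- Let G be a graph and C a clique of G with at least 2k+2 vertices. Then every set S of at most k edges such that G − S is diamond-free contains no edge with both endpoints in C. -/
lemma aux {V : Type*} (S : Set (Sym2 V)) (hS : S.Finite) :
    {v : V | ∃ e ∈ S, v ∈ e}.encard ≤ 2 * S.encard := by
  refine Set.Finite.induction_on (motive := fun S' _ => {v : V | ∃ e ∈ S', v ∈ e}.encard ≤ 2 * S'.encard) S hS (by simp) ?_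
  intro e S' hne hfin ih
  · have h1 : {v : V | ∃ e' ∈ insert e S', v ∈ e'} =
        {v : V | v ∈ e} ∪ {v : V | ∃ e' ∈ S', v ∈ e'} := by
      ext v; simp [or_and_right, exists_or]
    have h2 : {v : V | v ∈ e}.encard ≤ 2 := by
      induction e using Sym2.ind with
      | _ a b =>
        have : {v : V | v ∈ s(a,b)} = {a, b} := by ext v; simp [Sym2.mem_iff]
        rw [this]
        calc ({a, b} : Set V).encard ≤ ({b} : Set V).encard + 1 :=
              Set.encard_insert_le _ _
          _ ≤ 2 := by rw [Set.encard_singleton, one_add_one_eq_two]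
    rw [h1, Set.encard_insert_of_notMem hne, mul_add, mul_one]
    calc _ ≤ {v : V | v ∈ e}.encard + {v : V | ∃ e' ∈ S', v ∈ e'}.encard :=
          Set.encard_union_le _ _
      _ ≤ 2 + 2 * S'.encard := add_le_add h2 ih
      _ = 2 * S'.encard + 2 := by ring

/-- If `C` is a clique with at least `2k+2` vertices, then any set of at most `k` edges
whose deletion makes `G` diamond-free contains no edge with both endpoints in `C`. -/
theorem stmt_8 {V : Type*} (G : SimpleGraph V) (k : ℕ) (C : Set V)
    (hC : G.IsClique C) (hcard : ((2 * k + 2 : ℕ) : ℕ∞) ≤ C.encard) :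
    ∀ S : Set (Sym2 V), S ⊆ G.edgeSet → S.encard ≤ (k : ℕ∞) →
      DiamondFree (G.deleteEdges S) →
      ∀ x ∈ C, ∀ y ∈ C, s(x, y) ∉ S := by
  intro S hSE hScard hdf x hx y hy hxyS
  have hSfin : S.Finite := by
    rw [← Set.encard_ne_top_iff]
    exact fun h => by simp [h] at hScard
  set T : Set V := {v : V | ∃ e ∈ S, v ∈ e} with hTdef
  have hT : T.encard ≤ 2 * k := by
    calc T.encard ≤ 2 * S.encard := aux S hSfin
      _ ≤ 2 * k := by exact_mod_cast mul_le_mul_right hScard 2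
  have hxy : x ≠ y := by
    intro h; subst h
    have : G.Adj x x := G.mem_edgeSet.mp (hSE hxyS)
    exact G.irrefl this
  have hxT : x ∈ T := ⟨s(x,y), hxyS, by simp⟩
  have hyT : y ∈ T := ⟨s(x,y), hxyS, by simp⟩
  -- find two fresh vertices
  have hdiff : 2 ≤ (C \ T).encard := by
    have h2 : (2 : ℕ∞) + T.encard ≤ C.encard := by
      calc (2 : ℕ∞) + T.encard ≤ 2 + 2 * k := add_le_add le_rfl hT
        _ = ((2 * k + 2 : ℕ) : ℕ∞) := by push_cast; ring
        _ ≤ C.encard := hcard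
    have hTne : T.encard ≠ ⊤ := by
      intro h; rw [h] at hT
      exact (ENat.coe_ne_top (2 * k)) (top_le_iff.mp (by exact_mod_cast hT))
    exact ((ENat.addLECancellable_of_ne_top hTne).le_tsub_of_add_le_right h2).trans
      (Set.tsub_encard_le_encard_diff C T)
  obtain ⟨u, v, hu, hv, huv⟩ := Set.one_lt_encard_iff.1 (lt_of_lt_of_le (by norm_num : (1:ℕ∞) < 2) hdiff)
  obtain ⟨huC, huT⟩ := hu
  obtain ⟨hvC, hvT⟩ := hv
  have hnotS : ∀ (a : V) (e : Sym2 V), e ∈ S → u ∈ e → False := fun a e he hm => huT ⟨e, he, hm⟩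
  have huS : ∀ a : V, s(a, u) ∉ S := fun a h => huT ⟨_, h, by simp⟩
  have huS' : ∀ a : V, s(u, a) ∉ S := fun a h => huT ⟨_, h, by simp⟩
  have hvS : ∀ a : V, s(a, v) ∉ S := fun a h => hvT ⟨_, h, by simp⟩
  have hvS' : ∀ a : V, s(v, a) ∉ S := fun a h => hvT ⟨_, h, by simp⟩
  have hxu : x ≠ u := fun h => huT (h ▸ hxT)
  have hxv : x ≠ v := fun h => hvT (h ▸ hxT)
  have hyu : y ≠ u := fun h => huT (h ▸ hyT)
  have hyv : y ≠ v := fun h => hvT (h ▸ hyT)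
  have hxyS' : s(y, x) ∈ S := by rw [Sym2.eq_swap]; exact hxyS
  -- adjacency in the clique
  have A : ∀ a ∈ C, ∀ b ∈ C, a ≠ b → G.Adj a b := fun a ha b hb hab => hC ha hb hab
  refine hdf.elim ⟨⟨![x, y, u, v], ?_⟩, ?_⟩
  · intro a b hab
    fin_cases a <;> fin_cases b <;>
      simp_all [Matrix.cons_val_zero, Matrix.cons_val_one]
  · intro a b
    change (G.deleteEdges S).Adj (![x, y, u, v] a) (![x, y, u, v] b) ↔ diamondGraph.Adj a b
    fin_cases a <;> fin_cases b <;>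
      simp [diamondGraph, SimpleGraph.deleteEdges_adj, SimpleGraph.completeGraph, Sym2.eq, Sym2.rel_iff', Function.Embedding.coeFn_mk,
        hxy, hxy.symm, hxu, hxu.symm, hxv, hxv.symm, hyu, hyu.symm, hyv, hyv.symm, huv, huv.symm,
        hxyS, hxyS', huS, huS', hvS, hvS',
        A x hx y hy hxy, A y hy x hx hxy.symm,
        A x hx u huC hxu, A u huC x hx hxu.symm,
        A x hx v hvC hxv, A v hvC x hx hxv.symm,
        A y hy u huC hyu, A u huC y hy hyu.symm,
        A y hy v hvC hyv, A v hvC y hy hyv.symm,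
        A u huC v hvC huv, A v hvC u huC huv.symm]
end

section
/- Let G be a graph, C a clique of G, and C' ⊆ C a set of vertices each of which is local to C (i.e., N(v) ⊆ C for every v ∈ C'). Then every induced diamond in G contains at most one vertex of C'. -/
instance : DecidableRel diamondGraph.Adj := fun a b =>
  decidable_of_iff (a ≠ b ∧ ¬s(a, b) = s(0, 1))
    (by simp [diamondGraph, SimpleGraph.deleteEdges_adj, SimpleGraph.completeGraph])

/-- If every vertex of `C' ⊆ C` is local to the clique `C` (all its neighbors lie in
`C`), then every induced diamond of `G` contains at most one vertex of `C'`. -/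
theorem stmt_9 {V : Type*} (G : SimpleGraph V) (C C' : Set V)
    (hC : G.IsClique C) (hC' : C' ⊆ C)
    (hloc : ∀ v ∈ C', G.neighborSet v ⊆ C) :
    ∀ f : diamondGraph ↪g G, (Set.range ⇑f ∩ C').Subsingleton := by
  intro f x hx y hy
  obtain ⟨⟨a, rfl⟩, ha'⟩ := hx
  obtain ⟨⟨b, rfl⟩, hb'⟩ := hy
  by_contra hne
  have hab : a ≠ b := fun h => hne (by rw [h])
  have hmem : ∀ j : Fin 4,
      (j = a ∨ j = b ∨ diamondGraph.Adj a j ∨ diamondGraph.Adj b j) → f j ∈ C := by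
    intro j h
    rcases h with h | h | h | h
    · exact hC' (h ▸ ha')
    · exact hC' (h ▸ hb')
    · exact hloc (f a) ha' (f.map_adj_iff.2 h)
    · exact hloc (f b) hb' (f.map_adj_iff.2 h)
  have key : ∀ a b : Fin 4, a ≠ b → ∀ j : Fin 4, j = 0 ∨ j = 1 →
      (j = a ∨ j = b ∨ diamondGraph.Adj a j ∨ diamondGraph.Adj b j) := by decide
  have h0 : f 0 ∈ C := hmem 0 (key a b hab 0 (Or.inl rfl))
  have h1 : f 1 ∈ C := hmem 1 (key a b hab 1 (Or.inr rfl))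
  have hne01 : f 0 ≠ f 1 := fun h => by simpa using f.injective h
  have hadj : G.Adj (f 0) (f 1) := hC h0 h1 hne01
  have : diamondGraph.Adj 0 1 := f.map_adj_iff.1 hadj
  exact absurd this (by decide)
end

section
/- Let G be a graph, V_X ⊆ V(G) a set of vertices such that G − V_X is diamond-free, X a maximal set of edge-disjoint induced diamonds of G whose vertices are exactly V_X, and C the vertex set of a maximal clique of G − V_X. If a vertex v ∈ V_X is adjacent to at least two vertices of C, then v is adjacent to all vertices of C. -/
/-- Let `VX` be a D-modulator (so `G - VX` is diamond-free) such that every induced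
diamond of `G` has an edge with both endpoints in `VX` (as provided by a maximal packing
of edge-disjoint diamonds with vertex set `VX`), and let `C` be the vertex set of a
maximal clique of `G - VX`. If `v ∈ VX` is adjacent to at least two vertices of `C`,
then `v` is adjacent to all vertices of `C`. -/
theorem stmt_10 {V : Type*} (G : SimpleGraph V) (VX : Set V)
    (hdf : DiamondFree (G.induce VXᶜ))
    (hdia : ∀ f : diamondGraph ↪g G, ∃ x y : Fin 4,
      diamondGraph.Adj x y ∧ f x ∈ VX ∧ f y ∈ VX)
    (C : Set V) (hCdisj : C ⊆ VXᶜ) (hC : G.IsClique C)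
    (hmax : ∀ D : Set V, G.IsClique D → D ⊆ VXᶜ → C ⊆ D → D = C)
    (v : V) (hv : v ∈ VX)
    (a b : V) (ha : a ∈ C) (hb : b ∈ C) (hab : a ≠ b)
    (hva : G.Adj v a) (hvb : G.Adj v b) :
    ∀ c ∈ C, G.Adj v c := by
  intro c hc
  by_cases hca : c = a
  · subst hca; exact hva
  by_cases hcb : c = b
  · subst hcb; exact hvb
  by_contra hvc
  have hcv : ¬ G.Adj c v := fun h => hvc h.symm
  have hvnotC : v ∉ C := fun h => (hCdisj h) hv
  have hanotX : a ∉ VX := hCdisj ha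
  have hbnotX : b ∉ VX := hCdisj hb
  have hcnotX : c ∉ VX := hCdisj hc
  have hvc' : v ≠ c := fun h => hvnotC (h ▸ hc)
  have hva' : v ≠ a := G.ne_of_adj hva
  have hvb' : v ≠ b := G.ne_of_adj hvb
  have hac : G.Adj a c := hC ha hc (Ne.symm hca)
  have hbc : G.Adj b c := hC hb hc (Ne.symm hcb)
  have habA : G.Adj a b := hC ha hb hab
  let f : Fin 4 → V := ![v, c, a, b]
  have hinj : Function.Injective f := by
    intro x y hxy
    fin_cases x <;> fin_cases y <;>
      simp_all [f, hvc', hva', hvb', hca, hcb, hab, Ne.symm hvc', Ne.symm hva',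
        Ne.symm hvb', Ne.symm hab]
  have hadj : ∀ x y : Fin 4, G.Adj (f x) (f y) ↔ diamondGraph.Adj x y := by
    intro x y
    fin_cases x <;> fin_cases y <;>
      simp_all [f, diamondGraph, SimpleGraph.completeGraph, hvc', hva', hvb', hca, hcb, hab,
        hva, hvb, hac, hbc, habA, hva.symm, hvb.symm, hac.symm, hbc.symm, habA.symm,
        G.irrefl, Ne.symm hvc', Ne.symm hva', Ne.symm hvb', Ne.symm hab]
  obtain ⟨x, y, hxy, hx, hy⟩ := hdia ⟨⟨f, hinj⟩, fun {x y} => hadj x y⟩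
  have hx' : f x ∈ VX := hx
  have hy' : f y ∈ VX := hy
  have hfv : ∀ z : Fin 4, f z ∈ VX → f z = v := by
    intro z hz
    fin_cases z <;> simp_all [f]
  exact hinj.ne hxy.ne ((hfv x hx').trans (hfv y hy').symm)
end

section
/- Let G be a graph, V_X a set of vertices such that G − V_X is diamond-free and every induced diamond of G has an edge with both endpoints in V_X, and C the vertex set of a maximal clique of G − V_X. Then every vertex u ∈ V(G) \ (V_X ∪ C) is adjacent to at most one vertex of C. -/
/-- Let `VX` be such that `G - VX` is diamond-free and every induced diamond of `G` has
an edge with both endpoints in `VX`, and let `C` be the vertex set of a maximal clique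
of `G - VX`. Then every vertex outside `VX ∪ C` is adjacent to at most one vertex of
`C`. -/
theorem stmt_11 {V : Type*} (G : SimpleGraph V) (VX : Set V)
    (hdf : DiamondFree (G.induce VXᶜ))
    (hdia : ∀ f : diamondGraph ↪g G, ∃ x y : Fin 4,
      diamondGraph.Adj x y ∧ f x ∈ VX ∧ f y ∈ VX)
    (C : Set V) (hCdisj : C ⊆ VXᶜ) (hC : G.IsClique C)
    (hmax : ∀ D : Set V, G.IsClique D → D ⊆ VXᶜ → C ⊆ D → D = C) :
    ∀ u : V, u ∉ VX → u ∉ C → (C ∩ G.neighborSet u).Subsingleton := by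
  intro u huVX huC a ha b hb
  by_contra hne
  obtain ⟨haC, hua⟩ := ha
  obtain ⟨hbC, hub⟩ := hb
  -- u is not adjacent to all of C, else C ∪ {u} would be a bigger clique
  have hns : ∃ c ∈ C, ¬ G.Adj u c := by
    by_contra h
    push_neg at h
    have hclique : G.IsClique (insert u C) := by
      intro x hx y hy hxy
      rcases hx with rfl | hx
      · rcases hy with rfl | hy
        · exact absurd rfl hxy
        · exact h y hy
      · rcases hy with rfl | hy
        · exact (h x hx).symm
        · exact hC hx hy hxy
    have hsub : insert u C ⊆ VXᶜ := by
      intro x hx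
      rcases hx with rfl | hx
      · exact huVX
      · exact hCdisj hx
    have := hmax (insert u C) hclique hsub (Set.subset_insert u C)
    exact huC (this ▸ Set.mem_insert u C)
  obtain ⟨c, hcC, huc⟩ := hns
  -- distinctness facts
  have hua' : G.Adj u a := hua
  have hub' : G.Adj u b := hub
  have hu_a : u ≠ a := fun h => huC (h ▸ haC)
  have hu_b : u ≠ b := fun h => huC (h ▸ hbC)
  have hu_c : u ≠ c := fun h => huC (h ▸ hcC)
  have hc_a : c ≠ a := fun h => huc (h ▸ hua')
  have hc_b : c ≠ b := fun h => huc (h ▸ hub')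
  have hab : G.Adj a b := hC haC hbC hne
  have hca : G.Adj c a := hC hcC haC hc_a
  have hcb : G.Adj c b := hC hcC hbC hc_b
  -- build a diamond in G.induce VXᶜ
  let f : Fin 4 → ↥(VXᶜ) := ![⟨u, huVX⟩, ⟨c, hCdisj hcC⟩, ⟨a, hCdisj haC⟩, ⟨b, hCdisj hbC⟩]
  have hinj : Function.Injective f := by
    intro x y hxy
    fin_cases x <;> fin_cases y <;>
      simp_all [f, Subtype.ext_iff] <;>
      first
        | rfl
        | exact absurd hxy.symm hu_a | exact absurd hxy.symm hu_b
        | exact absurd hxy.symm hu_c | exact absurd hxy.symm hc_a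
        | exact absurd hxy.symm hc_b | exact absurd hxy.symm hne
  have emb : diamondGraph ↪g (G.induce VXᶜ) := by
    refine ⟨⟨f, hinj⟩, ?_⟩
    intro x y
    fin_cases x <;> fin_cases y <;>
      simp [f, diamondGraph, SimpleGraph.deleteEdges, SimpleGraph.completeGraph, Sym2.eq, Sym2.rel_iff'] <;>
      first
        | exact huc | exact fun h => huc h.symm
        | exact hua' | exact hua'.symm | exact hub' | exact hub'.symm
        | exact hca | exact hca.symm | exact hcb | exact hcb.symm
        | exact hab | exact hab.symm
        | exact G.irrefl
  exact hdf.false emb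
end

section
/- Let G be a graph, V_X a set of vertices such that G − V_X is diamond-free and every induced diamond of G uses an edge inside V_X, and C the vertex set of a maximal clique of G − V_X with |C| ≥ 2. Define A_C as the set of vertices of V_X adjacent to all vertices of C. Then A_C is a clique in G. -/
/-- With `VX` and a maximal clique `C` of `G - VX` as before and `|C| ≥ 2`, the set
`A_C` of vertices of `VX` adjacent to all vertices of `C` is a clique in `G`. -/
theorem stmt_12 {V : Type*} (G : SimpleGraph V) (VX : Set V)
    (hdf : DiamondFree (G.induce VXᶜ))
    (hdia : ∀ f : diamondGraph ↪g G, ∃ x y : Fin 4,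
      diamondGraph.Adj x y ∧ f x ∈ VX ∧ f y ∈ VX)
    (C : Set V) (hCdisj : C ⊆ VXᶜ) (hC : G.IsClique C)
    (hmax : ∀ D : Set V, G.IsClique D → D ⊆ VXᶜ → C ⊆ D → D = C)
    (h2 : (2 : ℕ∞) ≤ C.encard) :
    G.IsClique {v : V | v ∈ VX ∧ ∀ c ∈ C, G.Adj v c} := by
  rintro a ⟨haX, haC⟩ b ⟨hbX, hbC⟩ hne
  by_contra hab
  obtain ⟨x, y, hx, hy, hxy⟩ := Set.one_lt_encard_iff.mp (by
    exact lt_of_lt_of_le (by norm_num) h2)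
  have hax : G.Adj a x := haC x hx
  have hay : G.Adj a y := haC y hy
  have hbx : G.Adj b x := hbC x hx
  have hby : G.Adj b y := hbC y hy
  have hGxy : G.Adj x y := hC hx hy hxy
  have haxne : a ≠ x := fun h => hCdisj hx (h ▸ haX)
  have hayne : a ≠ y := fun h => hCdisj hy (h ▸ haX)
  have hbxne : b ≠ x := fun h => hCdisj hx (h ▸ hbX)
  have hbyne : b ≠ y := fun h => hCdisj hy (h ▸ hbX)
  let f : Fin 4 → V := ![a, b, x, y]
  have finj : Function.Injective f := by
    intro i j hij
    fin_cases i <;> fin_cases j <;>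
      simp_all [f, hne, haxne, hayne, hbxne, hbyne, hxy, hne.symm, haxne.symm,
        hayne.symm, hbxne.symm, hbyne.symm, hxy.symm]
  have hab' : ¬ G.Adj b a := fun h => hab h.symm
  have hmap : ∀ i j : Fin 4, G.Adj (f i) (f j) ↔ diamondGraph.Adj i j := by
    intro i j
    fin_cases i <;> fin_cases j <;>
      simp [f, diamondGraph, Sym2.eq, Sym2.rel_iff', hax, hay, hbx, hby, hGxy,
        hax.symm, hay.symm, hbx.symm, hby.symm, hGxy.symm, hab, hab']
  let emb : diamondGraph ↪g G := ⟨⟨f, finj⟩, fun {i j} => hmap i j⟩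
  obtain ⟨i, j, hij, hiX, hjX⟩ := hdia emb
  have : ∀ k : Fin 4, emb k ∈ VX → k = 0 ∨ k = 1 := by
    intro k hk
    fin_cases k <;> simp_all [emb, f]
    · exact hCdisj hx hk
    · exact hCdisj hy hk
  rcases this i hiX with hi | hi <;> rcases this j hjX with hj | hj <;>
    subst hi <;> subst hj <;>
    simp_all [diamondGraph, Sym2.eq, Sym2.rel_iff']
end

section
/- Let G be a graph in which every vertex has connected neighborhood, V_X a set of vertices such that G − V_X is diamond-free and every induced diamond of G has an edge inside V_X. Let C be the vertex set of a maximal clique of G − V_X, and for v ∈ C let B_v be the set of vertices of V(G) \ (V_X ∪ C) adjacent to v (and to exactly one vertex of C), and D_v the set of vertices of V_X adjacent to exactly one vertex of C, that vertex being v. If B_v is non-empty, then D_v is non-empty. -/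
lemma diamond_adj' (a b : Fin 4) :
    diamondGraph.Adj a b ↔ a ≠ b ∧ ¬(a = 0 ∧ b = 1) ∧ ¬(a = 1 ∧ b = 0) := by
  simp only [diamondGraph, SimpleGraph.deleteEdges_adj, SimpleGraph.completeGraph, SimpleGraph.top_adj,
    Set.mem_singleton_iff, Sym2.eq_iff]
  tauto

instance inst_s13 : DecidableRel diamondGraph.Adj :=
  fun a b => decidable_of_iff _ (diamond_adj' a b).symm

/-- Suppose every vertex of `G` has connected neighborhood, `G - VX` is diamond-free,
every induced diamond of `G` has an edge with both endpoints in `VX`, and `C` is the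
vertex set of a maximal clique of `G - VX` with `v ∈ C`. If `B_v` (the vertices outside
`VX ∪ C` whose unique neighbor in `C` is `v`) is nonempty, then `D_v` (the vertices of
`VX` whose unique neighbor in `C` is `v`) is nonempty. -/
theorem stmt_13 {V : Type*} (G : SimpleGraph V)
    (hnbr : ∀ w : V, (G.induce (G.neighborSet w)).Connected)
    (VX : Set V)
    (hdf : DiamondFree (G.induce VXᶜ))
    (hdia : ∀ f : diamondGraph ↪g G, ∃ x y : Fin 4,
      diamondGraph.Adj x y ∧ f x ∈ VX ∧ f y ∈ VX)
    (C : Set V) (hCdisj : C ⊆ VXᶜ) (hC : G.IsClique C)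
    (hmax : ∀ D : Set V, G.IsClique D → D ⊆ VXᶜ → C ⊆ D → D = C)
    (v : V) (hvC : v ∈ C)
    (hB : {u : V | u ∉ VX ∧ u ∉ C ∧ C ∩ G.neighborSet u = {v}}.Nonempty) :
    {u : V | u ∈ VX ∧ C ∩ G.neighborSet u = {v}}.Nonempty := by
  by_contra h
  rw [Set.not_nonempty_iff_eq_empty] at h
  obtain ⟨u, huX, huC, huN⟩ := hB
  have hvu : v ∈ C ∩ G.neighborSet u := by rw [huN]; rfl
  have huv : G.Adj u v := hvu.2
  -- C has another vertex besides v
  have hwex : ∃ w ∈ C, w ≠ v := by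
    by_contra hw
    push_neg at hw
    have hCv : C = {v} := Set.eq_singleton_iff_unique_mem.2 ⟨hvC, hw⟩
    have hclique : G.IsClique {u, v} := SimpleGraph.isClique_pair.2 (fun _ => huv)
    have hsub : ({u, v} : Set V) ⊆ VXᶜ := by
      intro x hx
      rcases hx with rfl | rfl
      · exact huX
      · exact hCdisj hvC
    have := hmax {u, v} hclique hsub (by rw [hCv]; intro x hx; right; exact hx)
    have : u ∈ C := by rw [← this]; left; rfl
    exact huC this
  obtain ⟨w, hwC, hwv⟩ := hwex
  have hu' : u ∈ G.neighborSet v := (G.mem_neighborSet v u).2 huv.symm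
  have hw' : w ∈ G.neighborSet v := (G.mem_neighborSet v w).2 (hC hvC hwC (Ne.symm hwv))
  -- walk in the induced neighborhood of v from u to w
  obtain ⟨p⟩ := (hnbr v).preconnected ⟨u, hu'⟩ ⟨w, hw'⟩
  set S : Set ↑(G.neighborSet v) :=
    {x | (↑x : V) ∉ C ∧ ∀ c ∈ C, c ≠ v → ¬ G.Adj (↑x) c} with hS
  have huS : (⟨u, hu'⟩ : ↑(G.neighborSet v)) ∈ S := by
    refine ⟨huC, fun c hcC hcv hadj => ?_⟩
    have : c ∈ C ∩ G.neighborSet u := ⟨hcC, hadj⟩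
    rw [huN] at this
    exact hcv this
  have hwS : (⟨w, hw'⟩ : ↑(G.neighborSet v)) ∉ S := fun hs => hs.1 hwC
  obtain ⟨d, -, hdS, hdS'⟩ := p.exists_boundary_dart S huS hwS
  set y : V := (↑d.fst : V) with hy
  set z : V := (↑d.snd : V) with hz
  have hyz : G.Adj y z := d.adj
  have hvy : G.Adj v y := (G.mem_neighborSet v y).1 d.fst.2
  have hvz : G.Adj v z := (G.mem_neighborSet v z).1 d.snd.2
  have hyC : y ∉ C := hdS.1
  have hynadj : ∀ c ∈ C, c ≠ v → ¬ G.Adj y c := hdS.2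
  -- get c ∈ C, c ≠ v, adjacent to z
  have hc : ∃ c ∈ C, c ≠ v ∧ G.Adj z c := by
    by_contra hcon
    push_neg at hcon
    apply hdS'
    refine ⟨fun hzC => ?_, fun c hcC hcv hadj => hcon c hcC hcv hadj⟩
    exact hynadj z hzC (G.ne_of_adj hvz).symm hyz
  obtain ⟨c, hcC, hcv, hzc⟩ := hc
  -- y ∉ VX
  have hyNy : C ∩ G.neighborSet y = {v} := by
    ext x
    constructor
    · rintro ⟨hxC, hxN⟩
      by_contra hxv
      exact hynadj x hxC hxv ((G.mem_neighborSet y x).1 hxN)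
    · rintro rfl
      exact ⟨hvC, (G.mem_neighborSet _ _).2 hvy.symm⟩
  have hyX : y ∉ VX := by
    intro hyX
    have : y ∈ ({u : V | u ∈ VX ∧ C ∩ G.neighborSet u = {v}} : Set V) := ⟨hyX, hyNy⟩
    rw [h] at this
    exact this
  have hvX : v ∉ VX := hCdisj hvC
  have hcX : c ∉ VX := hCdisj hcC
  have hvc : G.Adj v c := hC hvC hcC (Ne.symm hcv)
  have hyc : ¬ G.Adj y c := hynadj c hcC hcv
  have hync : y ≠ c := fun hh => hyC (hh ▸ hcC)
  -- build the diamond embedding f : 0 ↦ y, 1 ↦ c, 2 ↦ v, 3 ↦ z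
  let fn : Fin 4 → V := ![y, c, v, z]
  have hfn0 : fn 0 = y := rfl
  have hfn1 : fn 1 = c := rfl
  have hfn2 : fn 2 = v := rfl
  have hfn3 : fn 3 = z := rfl
  have hinj : Function.Injective fn := by
    intro a b hab
    fin_cases a <;> fin_cases b <;>
      simp only [hfn0, hfn1, hfn2, hfn3, Fin.mk_zero, Fin.mk_one] at hab ⊢ <;>
      first
        | rfl
        | exact absurd hab hync
        | exact absurd hab.symm hync
        | exact absurd hab (G.ne_of_adj hvy).symm
        | exact absurd hab.symm (G.ne_of_adj hvy).symm
        | exact absurd hab (G.ne_of_adj hvz).symm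
        | exact absurd hab.symm (G.ne_of_adj hvz).symm
        | exact absurd hab (Ne.symm hcv)
        | exact absurd hab.symm (Ne.symm hcv)
        | exact absurd hab (G.ne_of_adj hyz)
        | exact absurd hab.symm (G.ne_of_adj hyz)
        | exact absurd hab (G.ne_of_adj hzc)
        | exact absurd hab.symm (G.ne_of_adj hzc)
        | exact absurd hab (G.ne_of_adj hvc)
        | exact absurd hab.symm (G.ne_of_adj hvc)
  let f : diamondGraph ↪g G :=
    { toFun := fn
      inj' := hinj
      map_rel_iff' := by
        intro a b
        fin_cases a <;> fin_cases b <;>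
          first
            | exact iff_of_false (G.irrefl) (by decide)
            | exact iff_of_false hyc (by decide)
            | exact iff_of_false (fun hh => hyc hh.symm) (by decide)
            | exact iff_of_true hvy.symm (by decide)
            | exact iff_of_true hvy (by decide)
            | exact iff_of_true hvz.symm (by decide)
            | exact iff_of_true hvz (by decide)
            | exact iff_of_true hvc.symm (by decide)
            | exact iff_of_true hvc (by decide)
            | exact iff_of_true hyz (by decide)
            | exact iff_of_true hyz.symm (by decide)
            | exact iff_of_true hzc (by decide)
            | exact iff_of_true hzc.symm (by decide) }
  obtain ⟨a, b, hab, haX, hbX⟩ := hdia f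
  have hfne : ∀ i : Fin 4, fn i ∈ VX → i = 3 := by
    intro i hi
    fin_cases i
    · exact absurd hi hyX
    · exact absurd hi hcX
    · exact absurd hi hvX
    · rfl
  have hfa : f a = fn a := rfl
  have hfb : f b = fn b := rfl
  rw [hfa] at haX
  rw [hfb] at hbX
  rw [hfne a haX, hfne b hbX] at hab
  exact diamondGraph.irrefl hab
end

section
/- For fixed s ≥ 1, let G be a triangle-free graph, G' the graph obtained by adding a dominating vertex w, S ⊆ V(G), and F the set of edges {w, v} for v ∈ S. Then G − S is K_{1,s+1}-free if and only if G' − F is s-diamond-free. -/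
/-- The `s`-diamond `K₂ × (s+1)K₁`: two adjacent center vertices, each adjacent to `s+1`
pairwise non-adjacent vertices. For `s = 1` this is the diamond. -/
def sDiamond (s : ℕ) : SimpleGraph (Fin 2 ⊕ Fin (s + 1)) where
  Adj a b :=
    match a, b with
    | Sum.inl x, Sum.inl y => x ≠ y
    | Sum.inl _, Sum.inr _ => True
    | Sum.inr _, Sum.inl _ => True
    | Sum.inr _, Sum.inr _ => False
  symm := by
    constructor
    rintro (x | x) (y | y) h
    · exact h.symm
    · trivial
    · trivial
    · exact h
  loopless := by
    constructor
    rintro (x | x) h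
    · exact h rfl
    · exact h

/-- The star `K_{1,n}`: one center adjacent to `n` pairwise non-adjacent leaves. -/
def starGraph (n : ℕ) : SimpleGraph (Fin 1 ⊕ Fin n) where
  Adj a b :=
    match a, b with
    | Sum.inl _, Sum.inr _ => True
    | Sum.inr _, Sum.inl _ => True
    | _, _ => False
  symm := by
    constructor
    rintro (x | x) (y | y) h
    · exact h
    · trivial
    · trivial
    · exact h
  loopless := ⟨by rintro (x | x) h <;> exact h⟩

/-- The graph obtained from `G` by adding a new dominating vertex `none` adjacent to all
vertices of `G`. -/
def cone {V : Type*} (G : SimpleGraph V) : SimpleGraph (Option V) where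
  Adj a b :=
    match a, b with
    | some x, some y => G.Adj x y
    | some _, none => True
    | none, some _ => True
    | none, none => False
  symm := by
    constructor
    rintro (_ | x) (_ | y) h
    · exact h
    · trivial
    · trivial
    · exact h.symm
  loopless := by
    constructor
    rintro (_ | x) h
    · exact h
    · exact G.irrefl h

private lemma aux_star {V : Type*} {G : SimpleGraph V} {s : ℕ} {S : Set V}
    (c : V) (hc : c ∈ Sᶜ) (l : Fin (s + 1) → V) (hl : ∀ i, l i ∈ Sᶜ)
    (hinj : Function.Injective l)
    (hadj : ∀ i, G.Adj c (l i))
    (hnon : ∀ i j, i ≠ j → ¬ G.Adj (l i) (l j)) :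
    Nonempty (starGraph (s + 1) ↪g G.induce Sᶜ) := by
  refine ⟨⟨⟨fun a => match a with
    | Sum.inl _ => ⟨c, hc⟩
    | Sum.inr i => ⟨l i, hl i⟩, ?_⟩, ?_⟩⟩
  · rintro (x | i) (y | j) h
    · exact congrArg Sum.inl (Subsingleton.elim x y)
    · exact absurd (congrArg Subtype.val h) (hadj j).ne
    · exact absurd (congrArg Subtype.val h).symm (hadj i).ne
    · exact congrArg Sum.inr (hinj (congrArg Subtype.val h))
  · rintro (x | i) (y | j)
    · show G.Adj c c ↔ False
      simp
    · show G.Adj c (l j) ↔ True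
      simp [hadj j]
    · show G.Adj (l i) c ↔ True
      simp [(hadj i).symm]
    · show G.Adj (l i) (l j) ↔ False
      simp only [iff_false]
      rcases eq_or_ne i j with rfl | hij
      · exact G.irrefl
      · exact hnon i j hij

/-- For `s ≥ 1`, `G` triangle-free, `S ⊆ V(G)` and `F` the set of edges from the apex
`w` to the vertices of `S`: `G - S` is `K_{1,s+1}`-free iff `(cone G) - F` is
`s`-diamond-free. -/
theorem stmt_15 {V : Type*} (G : SimpleGraph V) (s : ℕ) (hs : 1 ≤ s)
    (htf : G.CliqueFree 3) (S : Set V) :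
    IsEmpty (starGraph (s + 1) ↪g G.induce Sᶜ) ↔
    IsEmpty (sDiamond s ↪g
      (cone G).deleteEdges {e : Sym2 (Option V) | ∃ v ∈ S, e = s(none, some v)}) := by

  classical
  rw [← not_nonempty_iff, ← not_nonempty_iff, not_iff_not]
  set H := (cone G).deleteEdges {e : Sym2 (Option V) | ∃ v ∈ S, e = s(none, some v)}
    with hHdef
  have hSome : ∀ x y : V, H.Adj (some x) (some y) ↔ G.Adj x y := by
    intro x y
    rw [hHdef, SimpleGraph.deleteEdges_adj]
    constructor
    · rintro ⟨h, -⟩; exact h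
    · intro h
      refine ⟨h, ?_⟩
      rintro ⟨v, hv, he⟩
      rw [Sym2.eq_iff] at he
      rcases he with ⟨h1, -⟩ | ⟨-, h2⟩ <;> simp_all
  have hNone : ∀ v : V, H.Adj none (some v) ↔ v ∉ S := by
    intro v
    rw [hHdef, SimpleGraph.deleteEdges_adj]
    constructor
    · rintro ⟨-, h⟩ hv
      exact h ⟨v, hv, rfl⟩
    · intro hv
      refine ⟨trivial, ?_⟩
      rintro ⟨u, hu, he⟩
      rw [Sym2.eq_iff] at he
      rcases he with ⟨-, h2⟩ | ⟨h1, -⟩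
      · exact hv (Option.some_injective V h2 ▸ hu)
      · simp_all
  constructor
  · rintro ⟨f⟩
    set c : V := (f (Sum.inl 0)).1 with hc
    set l : Fin (s + 1) → V := fun i => (f (Sum.inr i)).1 with hldef
    have hcS : c ∉ S := (f (Sum.inl 0)).2
    have hlS : ∀ i, l i ∉ S := fun i => (f (Sum.inr i)).2
    have hcl : ∀ i, G.Adj c (l i) := fun i =>
      f.map_rel_iff.mpr (show (starGraph (s + 1)).Adj (Sum.inl 0) (Sum.inr i) from trivial)
    have hll : ∀ i j, i ≠ j → ¬ G.Adj (l i) (l j) := by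
      intro i j hij hadj
      exact f.map_rel_iff.mp hadj
    have hlinj : Function.Injective l := by
      intro i j hij
      have : f (Sum.inr i) = f (Sum.inr j) := Subtype.ext hij
      exact Sum.inr_injective (f.injective this)
    refine ⟨⟨⟨fun a => match a with
      | Sum.inl x => if x = 0 then none else some c
      | Sum.inr i => some (l i), ?_⟩, ?_⟩⟩
    · rintro (x | i) (y | j) h
      · simp only at h
        fin_cases x <;> fin_cases y <;> simp_all
      · simp only at h
        fin_cases x <;> simp only [reduceIte] at h
        · exact (Option.some_ne_none _ h.symm).elim
        · exact absurd (Option.some_injective V h) (hcl j).ne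
      · simp only at h
        fin_cases y <;> simp only [reduceIte] at h
        · exact (Option.some_ne_none _ h).elim
        · exact absurd (Option.some_injective V h).symm (hcl i).ne
      · exact congrArg Sum.inr (hlinj (Option.some_injective V h))
    · rintro (x | i) (y | j)
      · show _ ↔ x ≠ y
        fin_cases x <;> fin_cases y <;> simp only [reduceIte]
        · simp [H.irrefl]
        · exact iff_of_true ((hNone c).mpr hcS) (by decide)
        · exact iff_of_true ((hNone c).mpr hcS).symm (by decide)
        · simp [H.irrefl]
      · show _ ↔ True
        fin_cases x <;> simp only [reduceIte, iff_true]
        · exact (hNone (l j)).mpr (hlS j)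
        · exact (hSome c (l j)).mpr (hcl j)
      · show _ ↔ True
        fin_cases y <;> simp only [reduceIte, iff_true]
        · exact ((hNone (l i)).mpr (hlS i)).symm
        · exact (hSome (l i) c).mpr (hcl i).symm
      · show H.Adj (some (l i)) (some (l j)) ↔ False
        rw [hSome, iff_false]
        rcases eq_or_ne i j with rfl | hij
        · exact G.irrefl
        · exact hll i j hij
  · rintro ⟨g⟩
    have hgll : ∀ i j : Fin (s + 1), i ≠ j → ¬ H.Adj (g (Sum.inr i)) (g (Sum.inr j)) := by
      intro i j hij hadj
      exact g.map_rel_iff.mp hadj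
    have hglr : ∀ (x : Fin 2) (i : Fin (s + 1)), H.Adj (g (Sum.inl x)) (g (Sum.inr i)) :=
      fun x i => g.map_rel_iff.mpr (show (sDiamond s).Adj (Sum.inl x) (Sum.inr i) from trivial)
    have main : ∀ u v : Fin 2, u ≠ v → g (Sum.inl u) = none →
        Nonempty (starGraph (s + 1) ↪g G.induce Sᶜ) := by
      intro u v huv hgu
      have hab : H.Adj (g (Sum.inl u)) (g (Sum.inl v)) := g.map_rel_iff.mpr huv
      cases hgv : g (Sum.inl v) with
      | none => exact absurd (g.injective (hgu.trans hgv.symm)) (by simpa using huv)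
      | some c =>
        rw [hgu, hgv] at hab
        have hcS : c ∉ S := (hNone c).mp hab
        have hleaf : ∀ i : Fin (s + 1), ∃ x : V, g (Sum.inr i) = some x := by
          intro i
          cases hgi : g (Sum.inr i) with
          | none =>
            have := hglr u i
            rw [hgu, hgi] at this
            exact absurd this H.irrefl
          | some x => exact ⟨x, rfl⟩
        choose l hlg using hleaf
        have hlS : ∀ i, l i ∉ S := by
          intro i
          have := hglr u i
          rw [hgu, hlg i] at this
          exact (hNone (l i)).mp this
        have hcl : ∀ i, G.Adj c (l i) := by
          intro i
          have := hglr v i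
          rw [hgv, hlg i] at this
          exact (hSome c (l i)).mp this
        have hlinj : Function.Injective l := by
          intro i j hij
          have : g (Sum.inr i) = g (Sum.inr j) := by rw [hlg i, hlg j, hij]
          exact Sum.inr_injective (g.injective this)
        have hnon : ∀ i j, i ≠ j → ¬ G.Adj (l i) (l j) := by
          intro i j hij hadj
          have := hgll i j hij
          rw [hlg i, hlg j] at this
          exact this ((hSome (l i) (l j)).mpr hadj)
        exact aux_star c hcS l hlS hlinj hcl hnon
    cases hga : g (Sum.inl 0) with
    | none => exact main 0 1 (by decide) hga
    | some x =>
      cases hgb : g (Sum.inl 1) with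
      | none => exact main 1 0 (by decide) hgb
      | some y =>
        exfalso
        have hab : H.Adj (g (Sum.inl 0)) (g (Sum.inl 1)) :=
          g.map_rel_iff.mpr (show (0 : Fin 2) ≠ 1 by decide)
        rw [hga, hgb] at hab
        have hxy : G.Adj x y := (hSome x y).mp hab
        have hi01 : (⟨0, by omega⟩ : Fin (s + 1)) ≠ ⟨1, by omega⟩ := by
          intro h
          simpa using congrArg Fin.val h
        -- at least one of the two leaves is `some`
        have key : ∃ z : V, (∃ i : Fin (s + 1), g (Sum.inr i) = some z) := by
          cases h0 : g (Sum.inr ⟨0, by omega⟩) with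
          | some z => exact ⟨z, _, h0⟩
          | none =>
            cases h1 : g (Sum.inr ⟨1, by omega⟩) with
            | some z => exact ⟨z, _, h1⟩
            | none =>
              exact absurd (g.injective (h0.trans h1.symm)) (by simpa using hi01)
        obtain ⟨z, i, hi⟩ := key
        have hxz : G.Adj x z := by
          have := hglr 0 i
          rw [hga, hi] at this
          exact (hSome x z).mp this
        have hyz : G.Adj y z := by
          have := hglr 1 i
          rw [hgb, hi] at this
          exact (hSome y z).mp this
        exact htf {x, y, z} (SimpleGraph.is3Clique_triple_iff.mpr ⟨hxy, hxz, hyz⟩)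
end

section
/- Let G be a graph, C a clique of G with |C| ≥ 2k+2, and C' ⊆ C a set of vertices each local to C (N(v) ⊆ C). Let G' be obtained from G by deleting a subset C'' ⊊ C' of vertices with |C \ C''| ≥ 2k+2. Then there is a set of at most k edges of G whose deletion makes G diamond-free if and only if there is such a set for G'. -/
lemma diamondGraph_adj (i j : Fin 4) :
    diamondGraph.Adj i j ↔ i ≠ j ∧ s(i, j) ≠ s(0, 1) := by
  simp [diamondGraph]

lemma diamond_embed_aux {W : Type*} (H : SimpleGraph W) (a b c d : W)
    (hab : a ≠ b) (hac : a ≠ c) (had : a ≠ d) (hbc : b ≠ c) (hbd : b ≠ d) (hcd : c ≠ d)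
    (nab : ¬ H.Adj a b) (aac : H.Adj a c) (aad : H.Adj a d)
    (abc : H.Adj b c) (abd : H.Adj b d) (acd : H.Adj c d) :
    Nonempty (diamondGraph ↪g H) := by
  have nba : ¬ H.Adj b a := fun h => nab h.symm
  refine ⟨⟨⟨![a, b, c, d], ?_⟩, ?_⟩⟩
  · intro i j hij
    fin_cases i <;> fin_cases j <;> simp_all
  · intro i j
    show H.Adj (![a, b, c, d] i) (![a, b, c, d] j) ↔ _
    fin_cases i <;> fin_cases j <;>
      rw [diamondGraph_adj] <;>
      simp_all [Sym2.eq, Sym2.rel_iff', H.irrefl, aac.symm, aad.symm, abc.symm, abd.symm,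
        acd.symm]

lemma solution_avoids_clique {W : Type*} {H : SimpleGraph W} {k : ℕ} {K : Set W}
    (hK : H.IsClique K) (hKcard : ((2 * k + 2 : ℕ) : ℕ∞) ≤ K.encard)
    {S : Set (Sym2 W)} (hS : S.encard ≤ (k : ℕ∞))
    (hdf : DiamondFree (H.deleteEdges S)) :
    ∀ ⦃x⦄, x ∈ K → ∀ ⦃y⦄, y ∈ K → x ≠ y → s(x, y) ∉ S := by
  classical
  intro x hx y hy hxy hmem
  have hSfin : S.Finite := Set.finite_of_encard_le_coe hS
  set T : Finset W := hSfin.toFinset.biUnion (fun e => {e.out.1, e.out.2}) with hT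
  have hTmem : ∀ e ∈ S, ∀ v, v ∈ e → v ∈ T := by
    intro e he v hv
    refine Finset.mem_biUnion.2 ⟨e, hSfin.mem_toFinset.2 he, ?_⟩
    have hveq : s(e.out.1, e.out.2) = e := e.out_eq
    rw [← hveq] at hv
    rcases Sym2.mem_iff.1 hv with h | h <;> simp [h]
  have hScard : hSfin.toFinset.card ≤ k := by
    have := hSfin.encard_eq_coe_toFinset_card
    rw [this] at hS
    exact_mod_cast hS
  have hTcard : T.card ≤ 2 * k := by
    calc T.card ≤ ∑ e ∈ hSfin.toFinset, ({e.out.1, e.out.2} : Finset W).card :=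
          Finset.card_biUnion_le
    _ ≤ ∑ _e ∈ hSfin.toFinset, 2 := Finset.sum_le_sum (fun e _ => Finset.card_insert_le _ _)
    _ = 2 * hSfin.toFinset.card := by rw [Finset.sum_const, smul_eq_mul, mul_comm]
    _ ≤ 2 * k := by omega
  have hbig : 1 < (K \ ↑T).encard := by
    by_contra hcon
    push_neg at hcon
    have hsub : K ⊆ (K \ ↑T) ∪ ↑T := by
      intro v hv
      by_cases hvT : v ∈ T
      · exact Or.inr hvT
      · exact Or.inl ⟨hv, hvT⟩
    have h1 : K.encard ≤ (K \ ↑T).encard + (↑T : Set W).encard :=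
      le_trans (Set.encard_le_encard hsub) (Set.encard_union_le _ _)
    have h2 : (↑T : Set W).encard = (T.card : ℕ∞) := Set.encard_coe_eq_coe_finsetCard T
    have h3 : ((2 * k + 2 : ℕ) : ℕ∞) ≤ 1 + (T.card : ℕ∞) := by
      calc ((2 * k + 2 : ℕ) : ℕ∞) ≤ K.encard := hKcard
      _ ≤ (K \ ↑T).encard + (↑T : Set W).encard := h1
      _ ≤ 1 + (T.card : ℕ∞) := by rw [h2]; exact add_le_add_left hcon _
    have h4 : ((2 * k + 2 : ℕ) : ℕ∞) ≤ ((1 + 2 * k : ℕ) : ℕ∞) := by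
      refine h3.trans ?_
      push_cast
      exact add_le_add_right (by exact_mod_cast hTcard) _
    have := (Nat.cast_le (α := ℕ∞)).1 h4
    omega
  obtain ⟨z, w, hz, hw, hzw⟩ := Set.one_lt_encard_iff.1 hbig
  obtain ⟨hzK, hzT⟩ := hz
  obtain ⟨hwK, hwT⟩ := hw
  have hxT : x ∈ T := hTmem _ hmem x (by simp)
  have hyT : y ∈ T := hTmem _ hmem y (by simp)
  have hxz : x ≠ z := fun h => hzT (by rwa [h] at hxT)
  have hxw : x ≠ w := fun h => hwT (by rwa [h] at hxT)
  have hyz : y ≠ z := fun h => hzT (by rwa [h] at hyT)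
  have hyw : y ≠ w := fun h => hwT (by rwa [h] at hyT)
  have notS : ∀ u v : W, v ∉ T → s(u, v) ∉ S := fun u v hv hS' =>
    hv (hTmem _ hS' v (by simp))
  obtain ⟨emb⟩ := diamond_embed_aux (H.deleteEdges S) x y z w hxy hxz hxw hyz hyw hzw
    (by simp [hmem])
    (by simp only [SimpleGraph.deleteEdges_adj]; exact ⟨hK hx hzK hxz, notS x z hzT⟩)
    (by simp only [SimpleGraph.deleteEdges_adj]; exact ⟨hK hx hwK hxw, notS x w hwT⟩)
    (by simp only [SimpleGraph.deleteEdges_adj]; exact ⟨hK hy hzK hyz, notS y z hzT⟩)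
    (by simp only [SimpleGraph.deleteEdges_adj]; exact ⟨hK hy hwK hyw, notS y w hwT⟩)
    (by simp only [SimpleGraph.deleteEdges_adj]; exact ⟨hK hzK hwK hzw, notS z w hwT⟩)
  exact hdf.false emb

/-- Clique reduction is safe: let `C` be a clique of `G` with at least `2k+2` vertices,
`C' ⊆ C` a set of vertices local to `C`, and `C'' ⊊ C'` with `|C \ C''| ≥ 2k+2`. Then
`G` has a set of at most `k` edges whose deletion makes it diamond-free iff the graph
obtained from `G` by deleting the vertices of `C''` does. -/
theorem stmt_18 {V : Type*} (G : SimpleGraph V) (k : ℕ)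
    (C C' C'' : Set V) (hC : G.IsClique C)
    (hCcard : ((2 * k + 2 : ℕ) : ℕ∞) ≤ C.encard)
    (hC'sub : C' ⊆ C) (hloc : ∀ v ∈ C', G.neighborSet v ⊆ C)
    (hC'' : C'' ⊂ C')
    (hrem : ((2 * k + 2 : ℕ) : ℕ∞) ≤ (C \ C'').encard) :
    (∃ S : Set (Sym2 V), S.encard ≤ (k : ℕ∞) ∧ DiamondFree (G.deleteEdges S)) ↔
    (∃ S : Set (Sym2 ↥(C''ᶜ)), S.encard ≤ (k : ℕ∞) ∧
      DiamondFree ((G.induce C''ᶜ).deleteEdges S)) := by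
  classical
  have hC''C : C'' ⊆ C := fun v hv => hC'sub (hC''.subset hv)
  have hinj : Function.Injective (Sym2.map (Subtype.val : ↥(C''ᶜ) → V)) :=
    Sym2.map.injective Subtype.val_injective
  constructor
  · -- easy direction: restrict the solution
    rintro ⟨S, hScard, hSdf⟩
    refine ⟨{e : Sym2 ↥(C''ᶜ) | Sym2.map Subtype.val e ∈ S}, ?_, ?_⟩
    · calc {e : Sym2 ↥(C''ᶜ) | Sym2.map Subtype.val e ∈ S}.encard
          = (Sym2.map Subtype.val '' {e : Sym2 ↥(C''ᶜ) | Sym2.map Subtype.val e ∈ S}).encard :=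
            (hinj.injOn.encard_image).symm
      _ ≤ S.encard := Set.encard_le_encard (by rintro _ ⟨e, he, rfl⟩; exact he)
      _ ≤ (k : ℕ∞) := hScard
    · constructor
      intro e
      refine hSdf.false (SimpleGraph.Embedding.comp ⟨⟨Subtype.val, Subtype.val_injective⟩, ?_⟩ e)
      intro u v
      simp [SimpleGraph.deleteEdges_adj, Sym2.map_pair_eq]
  · -- hard direction
    rintro ⟨S', hS'card, hdf'⟩
    set S : Set (Sym2 V) := Sym2.map Subtype.val '' S' with hSdef
    have hScard : S.encard ≤ (k : ℕ∞) := by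
      rw [hSdef, hinj.injOn.encard_image]; exact hS'card
    -- the clique K' in G'
    set K' : Set ↥(C''ᶜ) := {w : ↥(C''ᶜ) | ↑w ∈ C} with hK'def
    have hK'clique : (G.induce C''ᶜ).IsClique K' := by
      intro u hu v hv huv
      have : G.Adj ↑u ↑v := hC hu hv (fun h => huv (Subtype.ext h))
      simpa using this
    have hK'card : ((2 * k + 2 : ℕ) : ℕ∞) ≤ K'.encard := by
      have himg : Subtype.val '' K' = C \ C'' := by
        ext v
        constructor
        · rintro ⟨w, hw, rfl⟩
          exact ⟨hw, w.2⟩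
        · rintro ⟨hvC, hvC''⟩
          exact ⟨⟨v, hvC''⟩, hvC, rfl⟩
      have := (Subtype.val_injective.injOn (s := K')).encard_image
      rw [himg] at this
      rw [← this]
      exact hrem
    have hA : ∀ ⦃x⦄, x ∈ K' → ∀ ⦃y⦄, y ∈ K' → x ≠ y → s(x, y) ∉ S' :=
      solution_avoids_clique hK'clique hK'card hS'card hdf'
    -- no edge of S inside C
    have hSC : ∀ x y : V, x ∈ C → y ∈ C → x ≠ y → s(x, y) ∉ S := by
      rintro x y hx hy hxy ⟨e', he', heq⟩
      have hx'' : x ∉ C'' := by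
        intro hx''
        have : x ∈ Sym2.map Subtype.val e' := heq ▸ (by simp)
        obtain ⟨w, _, hwv⟩ := Sym2.mem_map.1 this
        exact (hwv ▸ w.2) hx''
      have hy'' : y ∉ C'' := by
        intro hy''
        have : y ∈ Sym2.map Subtype.val e' := heq ▸ (by simp)
        obtain ⟨w, _, hwv⟩ := Sym2.mem_map.1 this
        exact (hwv ▸ w.2) hy''
      have he'' : e' = s((⟨x, hx''⟩ : ↥(C''ᶜ)), (⟨y, hy''⟩ : ↥(C''ᶜ))) := by
        apply hinj
        rw [heq, Sym2.map_pair_eq]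
      exact hA (show (⟨x, hx''⟩ : ↥(C''ᶜ)) ∈ K' from hx)
        (show (⟨y, hy''⟩ : ↥(C''ᶜ)) ∈ K' from hy)
        (fun h => hxy (congrArg Subtype.val h)) (he'' ▸ he')
    -- edges of S avoid C''
    have hSavoid : ∀ ⦃x y : V⦄, s(x, y) ∈ S → x ∉ C'' := by
      rintro x y ⟨e', he', heq⟩ hx''
      have : x ∈ Sym2.map Subtype.val e' := heq ▸ (by simp)
      obtain ⟨w, _, hwv⟩ := Sym2.mem_map.1 this
      exact (hwv ▸ w.2) hx''
    have descend : ∀ (u v : V) (hu : u ∈ C''ᶜ) (hv : v ∈ C''ᶜ),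
        s(u, v) ∉ S → s((⟨u, hu⟩ : ↥(C''ᶜ)), (⟨v, hv⟩ : ↥(C''ᶜ))) ∉ S' := by
      intro u v hu hv hnS hmem
      exact hnS ⟨_, hmem, by rw [Sym2.map_pair_eq]⟩
    have lift : ∀ (u v : V) (hu : u ∈ C''ᶜ) (hv : v ∈ C''ᶜ),
        s(u, v) ∈ S → s((⟨u, hu⟩ : ↥(C''ᶜ)), (⟨v, hv⟩ : ↥(C''ᶜ))) ∈ S' := by
      rintro u v hu hv ⟨e', he', heq⟩
      have : e' = s((⟨u, hu⟩ : ↥(C''ᶜ)), (⟨v, hv⟩ : ↥(C''ᶜ))) := by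
        apply hinj
        rw [heq, Sym2.map_pair_eq]
      exact this ▸ he'
    refine ⟨S, hScard, ?_⟩
    constructor
    intro e
    set a := e 0 with ha
    set b := e 1 with hb
    set c := e 2 with hc
    set d := e 3 with hd
    have adjDG : ∀ {i j : Fin 4}, i ≠ j → s(i, j) ≠ s(0, 1) →
        (G.deleteEdges S).Adj (e i) (e j) :=
      fun h1 h2 => e.map_rel_iff.2 ((diamondGraph_adj _ _).2 ⟨h1, h2⟩)
    have hac : (G.deleteEdges S).Adj a c := adjDG (by decide) (by decide)
    have had : (G.deleteEdges S).Adj a d := adjDG (by decide) (by decide)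
    have hbc : (G.deleteEdges S).Adj b c := adjDG (by decide) (by decide)
    have hbd : (G.deleteEdges S).Adj b d := adjDG (by decide) (by decide)
    have hcd : (G.deleteEdges S).Adj c d := adjDG (by decide) (by decide)
    have hnab : ¬ (G.deleteEdges S).Adj a b :=
      fun h => ((diamondGraph_adj 0 1).1 (e.map_rel_iff.1 h)).2 rfl
    have hab : a ≠ b := e.injective.ne (by decide)
    have hkey : ∀ v x y : V, v ∈ C'' → (G.deleteEdges S).Adj v x →
        (G.deleteEdges S).Adj v y → ¬ (G.deleteEdges S).Adj x y → x ≠ y → False := by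
      intro v x y hv hvx hvy hnxy hxy
      have hvloc := hloc v (hC''.subset hv)
      have hx : x ∈ C := hvloc (show x ∈ G.neighborSet v from (SimpleGraph.deleteEdges_adj.1 hvx).1)
      have hy : y ∈ C := hvloc (show y ∈ G.neighborSet v from (SimpleGraph.deleteEdges_adj.1 hvy).1)
      have hGxy : G.Adj x y := hC hx hy hxy
      have hmem : s(x, y) ∈ S := by
        by_contra h
        exact hnxy (SimpleGraph.deleteEdges_adj.2 ⟨hGxy, h⟩)
      exact hSC x y hx hy hxy hmem
    have hcC'' : c ∉ C'' := fun h => hkey c a b h hac.symm hbc.symm hnab hab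
    have hdC'' : d ∉ C'' := fun h => hkey d a b h had.symm hbd.symm hnab hab
    have hGcd : G.Adj c d := (SimpleGraph.deleteEdges_adj.1 hcd).1
    have hcdS' := descend c d hcC'' hdC'' (SimpleGraph.deleteEdges_adj.1 hcd).2
    have main : ∀ x y : V, x ∈ C'' → ¬ (G.deleteEdges S).Adj x y →
        (G.deleteEdges S).Adj x c → (G.deleteEdges S).Adj x d →
        (G.deleteEdges S).Adj y c → (G.deleteEdges S).Adj y d → x ≠ y → False := by
      intro x y hxC'' hnxy hxc hxd hyc hyd hxy
      have hxloc := hloc x (hC''.subset hxC'')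
      have hcC : c ∈ C := hxloc (show c ∈ G.neighborSet x from (SimpleGraph.deleteEdges_adj.1 hxc).1)
      have hdC : d ∈ C := hxloc (show d ∈ G.neighborSet x from (SimpleGraph.deleteEdges_adj.1 hxd).1)
      have hxC : x ∈ C := hC''C hxC''
      have hsxy : s(x, y) ∉ S := fun h => hSavoid h hxC''
      have hnGxy : ¬ G.Adj x y := fun h => hnxy (SimpleGraph.deleteEdges_adj.2 ⟨h, hsxy⟩)
      have hyC : y ∉ C := fun h => hnGxy (hC hxC h hxy)
      obtain ⟨w, hwC', hwC''⟩ := Set.exists_of_ssubset hC''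
      have hwC : w ∈ C := hC'sub hwC'
      have hwloc := hloc w hwC'
      have hnwy : ¬ G.Adj w y := fun h => hyC (hwloc h)
      have hwy : w ≠ y := fun h => hyC (h ▸ hwC)
      have hGyc : G.Adj y c := (SimpleGraph.deleteEdges_adj.1 hyc).1
      have hGyd : G.Adj y d := (SimpleGraph.deleteEdges_adj.1 hyd).1
      have hwc : w ≠ c := fun h => hyC (hwloc (show G.Adj w y from h ▸ hGyc.symm))
      have hwd : w ≠ d := fun h => hyC (hwloc (show G.Adj w y from h ▸ hGyd.symm))
      have hyC''c : y ∈ C''ᶜ := fun h => hyC (hC''C h)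
      have hwcS' : s((⟨w, hwC''⟩ : ↥(C''ᶜ)), (⟨c, hcC''⟩ : ↥(C''ᶜ))) ∉ S' :=
        hA (show _ ∈ K' from hwC) (show _ ∈ K' from hcC)
          (fun h => hwc (congrArg Subtype.val h))
      have hwdS' : s((⟨w, hwC''⟩ : ↥(C''ᶜ)), (⟨d, hdC''⟩ : ↥(C''ᶜ))) ∉ S' :=
        hA (show _ ∈ K' from hwC) (show _ ∈ K' from hdC)
          (fun h => hwd (congrArg Subtype.val h))
      obtain ⟨emb⟩ := diamond_embed_aux ((G.induce C''ᶜ).deleteEdges S')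
        ⟨w, hwC''⟩ ⟨y, hyC''c⟩ ⟨c, hcC''⟩ ⟨d, hdC''⟩
        (fun h => hwy (congrArg Subtype.val h))
        (fun h => hwc (congrArg Subtype.val h))
        (fun h => hwd (congrArg Subtype.val h))
        (fun h => hGyc.ne (congrArg Subtype.val h))
        (fun h => hGyd.ne (congrArg Subtype.val h))
        (fun h => hGcd.ne (congrArg Subtype.val h))
        (by simp only [SimpleGraph.deleteEdges_adj, SimpleGraph.comap_adj,
              Function.Embedding.coe_subtype]
            exact fun h => hnwy h.1)
        (by simp only [SimpleGraph.deleteEdges_adj, SimpleGraph.comap_adj,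
              Function.Embedding.coe_subtype]
            exact ⟨hC hwC hcC hwc, hwcS'⟩)
        (by simp only [SimpleGraph.deleteEdges_adj, SimpleGraph.comap_adj,
              Function.Embedding.coe_subtype]
            exact ⟨hC hwC hdC hwd, hwdS'⟩)
        (by simp only [SimpleGraph.deleteEdges_adj, SimpleGraph.comap_adj,
              Function.Embedding.coe_subtype]
            exact ⟨hGyc, descend y c hyC''c hcC'' (SimpleGraph.deleteEdges_adj.1 hyc).2⟩)
        (by simp only [SimpleGraph.deleteEdges_adj, SimpleGraph.comap_adj,
              Function.Embedding.coe_subtype]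
            exact ⟨hGyd, descend y d hyC''c hdC'' (SimpleGraph.deleteEdges_adj.1 hyd).2⟩)
        (by simp only [SimpleGraph.deleteEdges_adj, SimpleGraph.comap_adj,
              Function.Embedding.coe_subtype]
            exact ⟨hGcd, hcdS'⟩)
      exact hdf'.false emb
    by_cases haC'' : a ∈ C''
    · exact main a b haC'' hnab hac had hbc hbd hab
    by_cases hbC'' : b ∈ C''
    · exact main b a hbC'' (fun h => hnab h.symm) hbc hbd hac had hab.symm
    · -- whole diamond is in the complement of C''
      have hemb := diamond_embed_aux ((G.induce C''ᶜ).deleteEdges S')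
        ⟨a, haC''⟩ ⟨b, hbC''⟩ ⟨c, hcC''⟩ ⟨d, hdC''⟩
        (fun h => hab (congrArg Subtype.val h))
        (fun h => hac.ne (congrArg Subtype.val h))
        (fun h => had.ne (congrArg Subtype.val h))
        (fun h => hbc.ne (congrArg Subtype.val h))
        (fun h => hbd.ne (congrArg Subtype.val h))
        (fun h => hcd.ne (congrArg Subtype.val h))
        (by simp only [SimpleGraph.deleteEdges_adj, SimpleGraph.comap_adj,
              Function.Embedding.coe_subtype]
            rintro ⟨hGab, hS'ab⟩
            exact hnab (SimpleGraph.deleteEdges_adj.2 ⟨hGab,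
              fun h => hS'ab (lift a b haC'' hbC'' h)⟩))
        (by simp only [SimpleGraph.deleteEdges_adj, SimpleGraph.comap_adj,
              Function.Embedding.coe_subtype]
            exact ⟨(SimpleGraph.deleteEdges_adj.1 hac).1,
              descend a c haC'' hcC'' (SimpleGraph.deleteEdges_adj.1 hac).2⟩)
        (by simp only [SimpleGraph.deleteEdges_adj, SimpleGraph.comap_adj,
              Function.Embedding.coe_subtype]
            exact ⟨(SimpleGraph.deleteEdges_adj.1 had).1,
              descend a d haC'' hdC'' (SimpleGraph.deleteEdges_adj.1 had).2⟩)
        (by simp only [SimpleGraph.deleteEdges_adj, SimpleGraph.comap_adj,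
              Function.Embedding.coe_subtype]
            exact ⟨(SimpleGraph.deleteEdges_adj.1 hbc).1,
              descend b c hbC'' hcC'' (SimpleGraph.deleteEdges_adj.1 hbc).2⟩)
        (by simp only [SimpleGraph.deleteEdges_adj, SimpleGraph.comap_adj,
              Function.Embedding.coe_subtype]
            exact ⟨(SimpleGraph.deleteEdges_adj.1 hbd).1,
              descend b d hbC'' hdC'' (SimpleGraph.deleteEdges_adj.1 hbd).2⟩)
        (by simp only [SimpleGraph.deleteEdges_adj, SimpleGraph.comap_adj,
              Function.Embedding.coe_subtype]
            exact ⟨hGcd, hcdS'⟩)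
      obtain ⟨emb⟩ := hemb
      exact hdf'.false emb
end
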